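/- Let T be a minimal interval exchange transformation on [ℓ,r) defined over ℤ[√d]. There exists a constant C > 0 such that for every nonempty S ∈ A([ℓ,r)) one has ρ⁺(S) ≤ C·Ψ(S), ρ⁻(S) ≤ C·Ψ(S), σ⁺(S) ≤ C/|S| and σ⁻(S) ≤ C/|S| (in particular the minima defining ρ⁺(S) and ρ⁻(S) exist). -/

import Mathlib

open Set MeasureTheory

noncomputable section

/-- Left endpoint `γ i` of the `i`-th exchanged semi-interval. -/
def sepPt {s : ℕ} (l : ℝ) (len : Fin s → ℝ) (i : Fin s) : ℝ :=
  l + ∑ j ∈ Finset.univ.filter (fun j => j < i), len j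

/-- Left endpoint `δ` of the image of the `i`-th exchanged semi-interval. -/
def imgPt {s : ℕ} (l : ℝ) (len : Fin s → ℝ) (π : Equiv.Perm (Fin s)) (i : Fin s) : ℝ :=
  l + ∑ j ∈ Finset.univ.filter (fun j => π j < π i), len j

/-- `T` is the `s`-interval exchange transformation on `[l,r)` with lengths `len`
and permutation `π`, extended by the identity outside `[l,r)`. -/
def IsIET (s : ℕ) (l r : ℝ) (len : Fin s → ℝ) (π : Equiv.Perm (Fin s))
    (T : Equiv.Perm ℝ) : Prop :=
  l < r ∧ (∀ i, 0 < len i) ∧ (∑ i, len i) = r - l ∧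
  (∀ z, z ∉ Set.Ico l r → T z = z) ∧
  ∀ i : Fin s, ∀ z ∈ Set.Ico (sepPt l len i) (sepPt l len i + len i),
    T z = z + (imgPt l len π i - sepPt l len i)

/-- The two-sided orbit `{T^n z : n ∈ ℤ}`. -/
def orbitZ (T : Equiv.Perm ℝ) (z : ℝ) : Set ℝ := {w | ∃ n : ℤ, (T ^ n) z = w}

/-- Regularity (idoc): the orbits of the nonzero separation points are infinite
and pairwise disjoint. -/
def IsRegularIET (s : ℕ) (l : ℝ) (len : Fin s → ℝ) (T : Equiv.Perm ℝ) : Prop :=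
  (∀ i : Fin s, (i : ℕ) ≠ 0 → (orbitZ T (sepPt l len i)).Infinite) ∧
  (∀ i j : Fin s, (i : ℕ) ≠ 0 → (j : ℕ) ≠ 0 → i ≠ j →
    Disjoint (orbitZ T (sepPt l len i)) (orbitZ T (sepPt l len j)))

/-- Minimality: every (two-sided) orbit of a point of `[l,r)` is dense in `[l,r)`. -/
def IsMinimalOn (T : Equiv.Perm ℝ) (l r : ℝ) : Prop :=
  ∀ z ∈ Set.Ico l r, Set.Ico l r ⊆ closure (orbitZ T z)

/-- First return time of `z` in `I` (defined via `sInf`; meaningful when `T` is minimal). -/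
def returnTime (T : Equiv.Perm ℝ) (I : Set ℝ) (z : ℝ) : ℕ :=
  sInf {n : ℕ | 0 < n ∧ (T ^ n) z ∈ I}

/-- The transformation induced by `T` on `I` (first-return map). -/
def inducedMap (T : Equiv.Perm ℝ) (I : Set ℝ) (z : ℝ) : ℝ :=
  (T ^ returnTime T I z) z

/-- The transformation induced by `T` on `[u,v)` is an interval exchange
transformation on `k` intervals with data `(lam, σ)`. -/
def InducedData (T : Equiv.Perm ℝ) (u v : ℝ) (k : ℕ) (lam : Fin k → ℝ)
    (σ : Equiv.Perm (Fin k)) : Prop :=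
  ∃ S : Equiv.Perm ℝ, IsIET k u v lam σ S ∧
    ∀ z ∈ Set.Ico u v, S z = inducedMap T (Set.Ico u v) z

/-- The semi-interval `[l,t)` is right admissible for `T`. -/
def RightAdmissible (s : ℕ) (l r : ℝ) (len : Fin s → ℝ) (T : Equiv.Perm ℝ)
    (t : ℝ) : Prop :=
  l < t ∧ t < r ∧ ∃ (i : Fin s) (k : ℤ), t = (T ^ k) (sepPt l len i) ∧
    (0 < k → ∀ h : ℤ, 0 < h → h < k → t < (T ^ h) (sepPt l len i)) ∧
    (k ≤ 0 → ∀ h : ℤ, k < h → h ≤ 0 → t < (T ^ h) (sepPt l len i))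

/-- `ρ⁺_{I,T}(z) = min {n > 0 : T^n z ∈ (u,v)}`. -/
def rhoPlusPt (T : Equiv.Perm ℝ) (u v z : ℝ) : ℕ :=
  sInf {n : ℕ | 0 < n ∧ (T ^ n) z ∈ Set.Ioo u v}

/-- `ρ⁻_{I,T}(z) = min {n ≥ 0 : T^{-n} z ∈ (u,v)}`. -/
def rhoMinusPt (T : Equiv.Perm ℝ) (u v z : ℝ) : ℕ :=
  sInf {n : ℕ | (T⁻¹ ^ n) z ∈ Set.Ioo u v}

/-- The set of neighbours `N_{I,T}(z)` of `z` with respect to `I = [u,v)` and `T`. -/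
def neighbours (T : Equiv.Perm ℝ) (u v z : ℝ) : Set ℝ :=
  {w | ∃ k : ℤ, -(rhoMinusPt T u v z : ℤ) ≤ k ∧ k < (rhoPlusPt T u v z : ℤ) ∧
    w = (T ^ k) z}

/-- The set of division points `Div(I,T)` of `I = [u,v)` with respect to `T`. -/
def divPoints (s : ℕ) (l : ℝ) (len : Fin s → ℝ) (T : Equiv.Perm ℝ)
    (u v : ℝ) : Set ℝ :=
  ⋃ i : Fin s, neighbours T u v (sepPt l len i)

/-- The semi-interval `[u,v) ⊆ [l,r)` is admissible for `T`. -/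
def Admissible (s : ℕ) (l r : ℝ) (len : Fin s → ℝ) (T : Equiv.Perm ℝ)
    (u v : ℝ) : Prop :=
  l ≤ u ∧ u < v ∧ v ≤ r ∧
  u ∈ divPoints s l len T u v ∪ {r} ∧ v ∈ divPoints s l len T u v ∪ {r}

/-- A bundled regular `s`-interval exchange transformation. -/
structure RIET (s : ℕ) where
  l : ℝ
  r : ℝ
  len : Fin s → ℝ
  perm : Equiv.Perm (Fin s)
  T : Equiv.Perm ℝ
  isIET : IsIET s l r len perm T
  isReg : IsRegularIET s l len T

/-- The right endpoint `max (γ_s, δ_{π(s)})` of `Z(T)`. -/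
def zPoint {s : ℕ} (X : RIET s) : ℝ :=
  if h : 0 < s then
    max (sepPt X.l X.len ⟨s - 1, by omega⟩)
      (imgPt X.l X.len X.perm (X.perm.symm ⟨s - 1, by omega⟩))
  else X.r

/-- The left endpoint `min (γ_2, δ_{π(2)})` of `Y(T)`. -/
def yPoint {s : ℕ} (X : RIET s) : ℝ :=
  if h : 1 < s then
    min (sepPt X.l X.len ⟨1, h⟩) (imgPt X.l X.len X.perm (X.perm.symm ⟨1, h⟩))
  else X.l

/-- `Y = ψ(X)`: one step of the right Rauzy induction. -/
def PsiStep {s : ℕ} (X Y : RIET s) : Prop :=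
  Y.l = X.l ∧ Y.r = zPoint X ∧
  ∀ z ∈ Set.Ico X.l (zPoint X), Y.T z = inducedMap X.T (Set.Ico X.l (zPoint X)) z

/-- `Y = φ(X)`: one step of the left Rauzy induction. -/
def PhiStep {s : ℕ} (X Y : RIET s) : Prop :=
  Y.l = yPoint X ∧ Y.r = X.r ∧
  ∀ z ∈ Set.Ico (yPoint X) X.r, Y.T z = inducedMap X.T (Set.Ico (yPoint X) X.r) z

/-- Equivalence of two `s`-interval exchange transformations: `(σ, mu)` is obtained
from `(π, lam)` by rescaling, possibly combined with the reversal `τ : i ↦ s - i + 1`. -/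
def IETEquiv (s : ℕ) (π σ : Equiv.Perm (Fin s)) (lam mu : Fin s → ℝ) : Prop :=
  (∃ c : ℝ, 0 < c ∧ σ = π ∧ ∀ i, mu i = c * lam i) ∨
  (∃ c : ℝ, 0 < c ∧ (∀ i, σ i = (π i).rev) ∧ ∀ i, mu i = c * lam i.rev)

/-- The subring `ℤ[√d]` of `ℝ`. -/
def Zsd (d : ℤ) : Set ℝ := {z | ∃ m n : ℤ, z = (m : ℝ) + (n : ℝ) * Real.sqrt d}

/-- `Ψ(z) = max (|m|,|n|)` for `z = m + n√d` (the representation being unique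
when `d ≥ 2` is squarefree). -/
def PsiNum (d : ℤ) (z : ℝ) : ℕ :=
  sInf {k : ℕ | ∃ m n : ℤ, z = (m : ℝ) + (n : ℝ) * Real.sqrt d ∧
    k = max m.natAbs n.natAbs}

/-- `Ψ(S) = max {Ψ(z) : z ∈ ∂S}`. -/
def PsiSet (d : ℤ) (S : Set ℝ) : ℕ := sSup (PsiNum d '' frontier S)

/-- The reduced complexity `Π(S) = |S| ⬝ Ψ(S)`. -/
def PiSet (d : ℤ) (S : Set ℝ) : ℝ := (volume S).toReal * PsiSet d S

/-- `S` belongs to the algebra `A([l,r))`: a nonempty finite union of semi-intervals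
of `[l,r)` with endpoints in `ℤ[√d]`. -/
def MemA (d : ℤ) (l r : ℝ) (S : Set ℝ) : Prop :=
  S.Nonempty ∧ S ⊆ Set.Ico l r ∧
  ∃ (k : ℕ) (a b : Fin k → ℝ), (∀ j, a j ∈ Zsd d ∧ b j ∈ Zsd d ∧ a j < b j) ∧
    S = ⋃ j, Set.Ico (a j) (b j)

/-- The interval exchange transformation with data `(l, r, len, π)` is defined over
`ℤ[√d]`: `l`, `r`, the separation points and the translation values lie in `ℤ[√d]`. -/
def DefinedOverZ (d : ℤ) (s : ℕ) (l r : ℝ) (len : Fin s → ℝ)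
    (π : Equiv.Perm (Fin s)) : Prop :=
  l ∈ Zsd d ∧ r ∈ Zsd d ∧
  ∀ i, sepPt l len i ∈ Zsd d ∧ (imgPt l len π i - sepPt l len i) ∈ Zsd d

/-- Maximal positive return time `ρ⁺(S)`. -/
def rhoPlusSet (T : Equiv.Perm ℝ) (S : Set ℝ) : ℕ :=
  sInf {n : ℕ | 1 ≤ n ∧ ⇑(T ^ n) '' S ⊆ ⋃ i ∈ Finset.range n, ⇑(T ^ i) '' S}

/-- Maximal negative return time `ρ⁻(S)`. -/
def rhoMinusSet (T : Equiv.Perm ℝ) (S : Set ℝ) : ℕ :=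
  sInf {m : ℕ | 1 ≤ m ∧ ⇑(T ^ m) '' S ⊆ ⋃ i ∈ Finset.range m, ⇑(T⁻¹ ^ i) '' S}

/-- Minimal positive return time `σ⁺(S)`. -/
def sigmaPlusSet (T : Equiv.Perm ℝ) (S : Set ℝ) : ℕ :=
  sInf {n : ℕ | 1 ≤ n ∧ (⇑(T ^ n) '' S ∩ S).Nonempty}

/-- Minimal negative return time `σ⁻(S)`. -/
def sigmaMinusSet (T : Equiv.Perm ℝ) (S : Set ℝ) : ℕ :=
  sInf {m : ℕ | 1 ≤ m ∧ (⇑(T⁻¹ ^ m) '' S ∩ S).Nonempty}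

/-- `D_{m,n}(T) = ⋃_{i=-m+1}^{n} T^i (Sep(T))`. -/
def Dmn (s : ℕ) (l : ℝ) (len : Fin s → ℝ) (T : Equiv.Perm ℝ) (m n : ℕ) : Set ℝ :=
  {w | ∃ (i : Fin s) (k : ℤ), -(m : ℤ) + 1 ≤ k ∧ k ≤ (n : ℤ) ∧
    w = (T ^ k) (sepPt l len i)}

/-- `[u,v)` belongs to `U(T) = ⋃_{m,n ≥ 1} U_{m,n}(T)`: it is one of the
semi-intervals into which `D_{m,n}(T)` partitions `[l,r)`. -/
def MemU (s : ℕ) (l r : ℝ) (len : Fin s → ℝ) (T : Equiv.Perm ℝ) (u v : ℝ) : Prop :=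
  ∃ m n : ℕ, 1 ≤ m ∧ 1 ≤ n ∧ u ∈ Dmn s l len T m n ∧
    (v ∈ Dmn s l len T m n ∨ v = r) ∧ ∀ w ∈ Dmn s l len T m n, w ∉ Set.Ioo u v


-- ## Auxiliary infrastructure

/-- `E` has its membership constant between consecutive points of `D` (right-closed gaps). -/
def Respects (D E : Set ℝ) : Prop :=
  ∀ x y : ℝ, x ≤ y → (∀ t ∈ D, t ∉ Set.Ioc x y) → (x ∈ E ↔ y ∈ E)

lemma Respects.mono {D D' E : Set ℝ} (h : Respects D E) (hDD : D ⊆ D') : Respects D' E :=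
  fun x y hxy hD => h x y hxy (fun t ht => hD t (hDD ht))

lemma Respects.inter {D E F : Set ℝ} (hE : Respects D E) (hF : Respects D F) :
    Respects D (E ∩ F) := by
  intro x y hxy hD
  have := hE x y hxy hD; have := hF x y hxy hD
  simp only [Set.mem_inter_iff]; tauto

lemma Respects.compl {D E : Set ℝ} (hE : Respects D E) : Respects D Eᶜ := by
  intro x y hxy hD
  have := hE x y hxy hD
  simp only [Set.mem_compl_iff]; tauto

lemma Respects.diff {D E F : Set ℝ} (hE : Respects D E) (hF : Respects D F) :
    Respects D (E \ F) := hE.inter hF.compl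

lemma Respects.biInter {D : Set ℝ} {ι : Type*} (t : Finset ι) {E : ι → Set ℝ}
    (h : ∀ i ∈ t, Respects D (E i)) : Respects D (⋂ i ∈ t, E i) := by
  intro x y hxy hD
  simp only [Set.mem_iInter]
  exact ⟨fun hx i hi => ((h i hi) x y hxy hD).1 (hx i hi),
    fun hy i hi => ((h i hi) x y hxy hD).2 (hy i hi)⟩

lemma respects_Ico {D : Set ℝ} {l r : ℝ} (hl : l ∈ D) (hr : r ∈ D) :
    Respects D (Set.Ico l r) := by
  intro x y hxy hD
  constructor
  · rintro ⟨h1, h2⟩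
    refine ⟨le_trans h1 hxy, ?_⟩
    by_contra hy
    exact hD r hr ⟨h2, not_lt.1 hy⟩
  · rintro ⟨h1, h2⟩
    constructor
    · by_contra hx
      exact hD l hl ⟨not_le.1 hx, h1⟩
    · exact lt_of_le_of_lt hxy h2

/-- A nonempty `D`-respecting subset of `[l,r)` contains a whole cell `[u,v)` with
`u, v ∈ D`. -/
lemma Respects.exists_Ico {D E : Set ℝ} {l r : ℝ} (hD : D.Finite) (hl : l ∈ D) (hr : r ∈ D)
    (hE : Respects D E) (hEsub : E ⊆ Set.Ico l r) {z : ℝ} (hz : z ∈ E) :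
    ∃ u v : ℝ, u ∈ D ∧ v ∈ D ∧ u ≤ z ∧ z < v ∧ Set.Ico u v ⊆ E := by
  have hzlr : z ∈ Set.Ico l r := hEsub hz
  classical
  set Dz : Finset ℝ := hD.toFinset.filter (fun t => t ≤ z) with hDz
  set Dz' : Finset ℝ := hD.toFinset.filter (fun t => z < t) with hDz'
  have hne : Dz.Nonempty := ⟨l, by simp [hDz, hD.mem_toFinset, hl, hzlr.1]⟩
  have hne' : Dz'.Nonempty := ⟨r, by simp [hDz', hD.mem_toFinset, hr, hzlr.2]⟩
  refine ⟨Dz.max' hne, Dz'.min' hne', ?_, ?_, ?_, ?_, ?_⟩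
  · have := Dz.max'_mem hne; simp only [hDz, Finset.mem_filter, hD.mem_toFinset] at this
    exact this.1
  · have := Dz'.min'_mem hne'; simp only [hDz', Finset.mem_filter, hD.mem_toFinset] at this
    exact this.1
  · have := Dz.max'_mem hne; simp only [hDz, Finset.mem_filter, hD.mem_toFinset] at this
    exact this.2
  · have := Dz'.min'_mem hne'; simp only [hDz', Finset.mem_filter, hD.mem_toFinset] at this
    exact this.2
  · rintro w ⟨hw1, hw2⟩
    rcases le_or_gt z w with hzw | hwz
    · have : w ∈ E ↔ z ∈ E := by
        refine (hE z w hzw ?_).symm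
        rintro t ht ⟨ht1, ht2⟩
        have : t ∈ Dz' := by simp [hDz', hD.mem_toFinset, ht, ht1]
        exact absurd (Dz'.min'_le t this) (not_le.2 (lt_of_le_of_lt ht2 hw2))
      exact this.2 hz
    · have : w ∈ E ↔ z ∈ E := by
        refine hE w z hwz.le ?_
        rintro t ht ⟨ht1, ht2⟩
        have htz : t ∈ Dz := by simp [hDz, hD.mem_toFinset, ht, ht2]
        exact absurd (Dz.le_max' t htz) (not_le.2 (lt_of_le_of_lt hw1 ht1))
      exact this.2 hz

variable {d : ℤ}

lemma sqrtd_pos (hd : 2 ≤ d) : 0 < Real.sqrt d :=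
  Real.sqrt_pos.2 (by exact_mod_cast (by omega : (0:ℤ) < d))

lemma sqrtd_irr (hd : 2 ≤ d) (hsf : Squarefree d) : Irrational (Real.sqrt d) := by
  rw [irrational_sqrt_intCast_iff_of_nonneg (by omega)]
  rintro ⟨k, hk⟩
  have hu : IsUnit k := hsf k (by rw [hk])
  rcases Int.isUnit_iff.1 hu with rfl | rfl <;> omega

lemma sqrtd_ne_ratio (hirr : Irrational (Real.sqrt d)) (m n : ℤ) (hn : n ≠ 0) :
    Real.sqrt d ≠ (m : ℝ) / (n : ℝ) := by
  intro h
  exact hirr ⟨(m : ℚ) / (n : ℚ), by rw [h]; push_cast; ring⟩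

lemma rep_unique (hirr : Irrational (Real.sqrt d)) {m n m' n' : ℤ}
    (h : (m : ℝ) + (n : ℝ) * Real.sqrt d = (m' : ℝ) + (n' : ℝ) * Real.sqrt d) :
    m = m' ∧ n = n' := by
  by_cases hnn : n = n'
  · subst hnn
    refine ⟨?_, rfl⟩
    have : (m : ℝ) = m' := by linarith
    exact_mod_cast this
  · exfalso
    have hne : ((n - n' : ℤ) : ℝ) ≠ 0 := by
      have : (n - n' : ℤ) ≠ 0 := sub_ne_zero.2 hnn
      exact_mod_cast this
    apply sqrtd_ne_ratio hirr (m' - m) (n - n') (sub_ne_zero.2 hnn)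
    rw [eq_div_iff hne]
    push_cast
    linarith

lemma PsiNum_eq (hirr : Irrational (Real.sqrt d)) (m n : ℤ) :
    PsiNum d ((m : ℝ) + (n : ℝ) * Real.sqrt d) = max m.natAbs n.natAbs := by
  have : {k : ℕ | ∃ m' n' : ℤ, (m : ℝ) + (n : ℝ) * Real.sqrt d
      = (m' : ℝ) + (n' : ℝ) * Real.sqrt d ∧ k = max m'.natAbs n'.natAbs}
      = {max m.natAbs n.natAbs} := by
    ext k
    constructor
    · rintro ⟨m', n', hrep, rfl⟩
      obtain ⟨rfl, rfl⟩ := rep_unique hirr hrep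
      rfl
    · rintro rfl
      exact ⟨m, n, rfl, rfl⟩
  rw [PsiNum, this, csInf_singleton]

lemma PsiNum_sub (hirr : Irrational (Real.sqrt d)) {x y : ℝ}
    (hx : x ∈ Zsd d) (hy : y ∈ Zsd d) :
    x - y ∈ Zsd d ∧ PsiNum d (x - y) ≤ PsiNum d x + PsiNum d y := by
  obtain ⟨m, n, rfl⟩ := hx
  obtain ⟨m', n', rfl⟩ := hy
  have h1 : ((m : ℝ) + n * Real.sqrt d) - ((m' : ℝ) + n' * Real.sqrt d)
      = ((m - m' : ℤ) : ℝ) + ((n - n' : ℤ) : ℝ) * Real.sqrt d := by push_cast; ring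
  constructor
  · exact ⟨m - m', n - n', h1⟩
  · rw [h1, PsiNum_eq hirr, PsiNum_eq hirr, PsiNum_eq hirr]
    have := Int.natAbs_sub_le m m'
    have := Int.natAbs_sub_le n n'
    omega

lemma PsiNum_add (hirr : Irrational (Real.sqrt d)) {x y : ℝ}
    (hx : x ∈ Zsd d) (hy : y ∈ Zsd d) :
    x + y ∈ Zsd d ∧ PsiNum d (x + y) ≤ PsiNum d x + PsiNum d y := by
  obtain ⟨m, n, rfl⟩ := hx
  obtain ⟨m', n', rfl⟩ := hy
  have h1 : ((m : ℝ) + n * Real.sqrt d) + ((m' : ℝ) + n' * Real.sqrt d)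
      = ((m + m' : ℤ) : ℝ) + ((n + n' : ℤ) : ℝ) * Real.sqrt d := by push_cast; ring
  constructor
  · exact ⟨m + m', n + n', h1⟩
  · rw [h1, PsiNum_eq hirr, PsiNum_eq hirr, PsiNum_eq hirr]
    have := Int.natAbs_add_le m m'
    have := Int.natAbs_add_le n n'
    omega

lemma abs_intCast_le {m : ℤ} {Q : ℕ} (h : m.natAbs ≤ Q) : |(m : ℝ)| ≤ (Q : ℝ) := by
  rw [← Int.cast_abs]
  have h1 : |m| ≤ (Q : ℤ) := by rw [Int.abs_eq_natAbs]; exact_mod_cast h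
  exact_mod_cast h1

lemma Zsd_gap (hd : 2 ≤ d) (hsf : Squarefree d) {x : ℝ} (hx : x ∈ Zsd d) (hx0 : x ≠ 0)
    {Q : ℕ} (hQ : PsiNum d x ≤ Q) : 1 / ((1 + Real.sqrt d) * Q) ≤ |x| := by
  have hirr := sqrtd_irr hd hsf
  obtain ⟨m, n, rfl⟩ := hx
  rw [PsiNum_eq hirr] at hQ
  have hmQ : m.natAbs ≤ Q := le_trans (le_max_left _ _) hQ
  have hnQ : n.natAbs ≤ Q := le_trans (le_max_right _ _) hQ
  have hd0 : (0:ℝ) ≤ (d : ℝ) := by exact_mod_cast (by omega : (0:ℤ) ≤ d)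
  have hss : Real.sqrt d * Real.sqrt d = (d : ℝ) := Real.mul_self_sqrt hd0
  have hsp := sqrtd_pos hd
  -- nonvanishing of the norm
  have hnz : m ^ 2 - d * n ^ 2 ≠ 0 := by
    intro h
    by_cases hn : n = 0
    · subst hn
      have hm : m = 0 := by
        have h2 : m ^ 2 = 0 := by linarith [h]
        exact pow_eq_zero_iff (n := 2) (by norm_num) |>.1 h2
      subst hm
      simp at hx0
    · apply sqrtd_ne_ratio hirr (m.natAbs : ℤ) (n.natAbs : ℤ)
        (by exact_mod_cast Int.natAbs_ne_zero.2 hn)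
      have hZ : m ^ 2 = d * n ^ 2 := by linarith
      have hm2 : (m : ℝ) ^ 2 = (d : ℝ) * (n : ℝ) ^ 2 := by exact_mod_cast hZ
      have hn0 : ((n.natAbs : ℤ) : ℝ) ≠ 0 := by
        exact_mod_cast Int.natAbs_ne_zero.2 hn
      rw [eq_div_iff hn0]
      have habs : ((m.natAbs : ℤ) : ℝ) = |(m:ℝ)| := by
        rw [← Int.cast_abs, Int.abs_eq_natAbs]
      have habs' : ((n.natAbs : ℤ) : ℝ) = |(n:ℝ)| := by
        rw [← Int.cast_abs, Int.abs_eq_natAbs]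
      rw [habs, habs']
      have h2 : (Real.sqrt d * |(n:ℝ)|) ^ 2 = |(m:ℝ)| ^ 2 := by
        rw [mul_pow, Real.sq_sqrt hd0, sq_abs, sq_abs]
        exact hm2.symm
      have h3 := congrArg Real.sqrt h2
      rwa [Real.sqrt_sq (by positivity), Real.sqrt_sq (abs_nonneg _)] at h3
  have hQpos : 0 < Q := by
    rcases Nat.eq_zero_or_pos Q with h | h
    · exfalso
      apply hx0
      have hm : m = 0 := by omega
      have hn : n = 0 := by omega
      subst hm; subst hn; simp
    · exact h
  have key : ((m:ℝ) + n * Real.sqrt d) * ((m:ℝ) - n * Real.sqrt d) = (m:ℝ)^2 - d * n^2 := by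
    have h4 : ((m:ℝ) + n * Real.sqrt d) * ((m:ℝ) - n * Real.sqrt d)
        = (m:ℝ)^2 - (Real.sqrt d * Real.sqrt d) * (n:ℝ)^2 := by ring
    rw [h4, hss]
  have h1 : (1:ℝ) ≤ |(m:ℝ)^2 - (d:ℝ) * (n:ℝ)^2| := by
    have h5 : (1:ℤ) ≤ |m^2 - d*n^2| := Int.one_le_abs hnz
    have h6 : ((m^2 - d*n^2 : ℤ):ℝ) = (m:ℝ)^2 - (d:ℝ)*(n:ℝ)^2 := by push_cast; ring
    calc (1:ℝ) = ((1:ℤ):ℝ) := by norm_num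
    _ ≤ |((m^2 - d*n^2 : ℤ):ℝ)| := by rw [← Int.cast_abs]; exact_mod_cast h5
    _ = _ := by rw [h6]
  have hconj : |(m:ℝ) - (n:ℝ) * Real.sqrt d| ≤ (1 + Real.sqrt d) * Q := by
    have e1 : |(m:ℝ) - (n:ℝ) * Real.sqrt d| ≤ |(m:ℝ)| + |(n:ℝ) * Real.sqrt d| := abs_sub _ _
    have e2 : |(n:ℝ) * Real.sqrt d| = |(n:ℝ)| * Real.sqrt d := by
      rw [abs_mul, abs_of_nonneg hsp.le]
    have e3 := abs_intCast_le hmQ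
    have e4 := abs_intCast_le hnQ
    nlinarith [hsp.le]
  have habs2 : 1 ≤ |(m:ℝ) + (n:ℝ)*Real.sqrt d| * ((1 + Real.sqrt d) * Q) := by
    calc (1:ℝ) ≤ |(m:ℝ)^2 - (d:ℝ)*(n:ℝ)^2| := h1
    _ = |(m:ℝ) + (n:ℝ)*Real.sqrt d| * |(m:ℝ) - (n:ℝ)*Real.sqrt d| := by rw [← abs_mul, key]
    _ ≤ _ := mul_le_mul_of_nonneg_left hconj (abs_nonneg _)
  have hQR : (0:ℝ) < Q := by exact_mod_cast hQpos
  have hpos : 0 < (1 + Real.sqrt d) * Q := by nlinarith [hsp]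
  rw [div_le_iff₀ hpos]
  linarith

lemma Zsd_gap2 (hd : 2 ≤ d) (hsf : Squarefree d) {u v : ℝ} (hu : u ∈ Zsd d) (hv : v ∈ Zsd d)
    (huv : u ≠ v) {Q : ℕ} (hQu : PsiNum d u ≤ Q) (hQv : PsiNum d v ≤ Q) :
    1 / ((1 + Real.sqrt d) * (2 * Q)) ≤ |u - v| := by
  have hirr := sqrtd_irr hd hsf
  obtain ⟨hmem, hle⟩ := PsiNum_sub hirr hu hv
  have h2Q : PsiNum d (u - v) ≤ 2 * Q := by omega
  have := Zsd_gap hd hsf hmem (sub_ne_zero.2 huv) h2Q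
  calc 1 / ((1 + Real.sqrt d) * (2 * Q)) = 1 / ((1 + Real.sqrt d) * ((2 * Q : ℕ) : ℝ)) := by
        push_cast; ring_nf
  _ ≤ |u - v| := this


lemma PsiNum_eq_zero {d : ℤ} (hirr : Irrational (Real.sqrt d)) {x : ℝ}
    (hx : x ∈ Zsd d) (h : PsiNum d x = 0) : x = 0 := by
  obtain ⟨m, n, rfl⟩ := hx
  rw [PsiNum_eq hirr] at h
  have hm : m = 0 := by omega
  have hn : n = 0 := by omega
  subst hm; subst hn; simp

/-- A piecewise translation of `ℝ`: identity outside `[l,r)`, and a finite family of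
disjoint `Ico` pieces tiling `[l,r)` on each of which it is a translation, with the
translated pieces also tiling `[l,r)`. -/
structure PT (l r : ℝ) where
  U : Equiv.Perm ℝ
  s : ℕ
  e : Fin s → ℝ
  len : Fin s → ℝ
  a : Fin s → ℝ
  hlr : l < r
  id_out : ∀ z, z ∉ Set.Ico l r → U z = z
  trans : ∀ (i) (z), z ∈ Set.Ico (e i) (e i + len i) → U z = z + a i
  cover : ∀ z ∈ Set.Ico l r, ∃ i, z ∈ Set.Ico (e i) (e i + len i)
  sub : ∀ i, Set.Ico (e i) (e i + len i) ⊆ Set.Ico l r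
  disj : ∀ i j, i ≠ j →
    Disjoint (Set.Ico (e i) (e i + len i)) (Set.Ico (e j) (e j + len j))
  succ : ∀ i, e i + len i = r ∨ ∃ j, e j = e i + len i
  img_cover : ∀ z ∈ Set.Ico l r, ∃ i, z ∈ Set.Ico (e i + a i) (e i + len i + a i)
  img_disj : ∀ i j, i ≠ j →
    Disjoint (Set.Ico (e i + a i) (e i + len i + a i))
      (Set.Ico (e j + a j) (e j + len j + a j))

namespace PT

variable {l r : ℝ} (P : PT l r)

lemma maps_Ico {z : ℝ} (hz : z ∈ Set.Ico l r) : P.U z ∈ Set.Ico l r := by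
  by_contra h
  have h1 : P.U (P.U z) = P.U z := P.id_out _ h
  have h2 : P.U z = z := P.U.injective h1
  rw [h2] at h
  exact h hz

lemma symm_maps_Ico {z : ℝ} (hz : z ∈ Set.Ico l r) : P.U.symm z ∈ Set.Ico l r := by
  by_contra h
  have h1 : P.U (P.U.symm z) = P.U.symm z := P.id_out _ h
  rw [Equiv.apply_symm_apply] at h1
  rw [← h1] at h
  exact h hz

lemma img_sub (i : Fin P.s) :
    Set.Ico (P.e i + P.a i) (P.e i + P.len i + P.a i) ⊆ Set.Ico l r := by
  rintro z ⟨h1, h2⟩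
  have hz : z - P.a i ∈ Set.Ico (P.e i) (P.e i + P.len i) := ⟨by linarith, by linarith⟩
  have : P.U (z - P.a i) = z := by rw [P.trans i _ hz]; ring
  rw [← this]
  exact P.maps_Ico (P.sub i hz)

lemma preimage_sub {E : Set ℝ} (hEsub : E ⊆ Set.Ico l r) : ⇑P.U ⁻¹' E ⊆ Set.Ico l r := by
  intro z hz
  by_contra h
  have := P.id_out z h
  rw [Set.mem_preimage, this] at hz
  exact h (hEsub hz)

lemma respects_preimage {D E : Set ℝ} (hE : Respects D E) (hEsub : E ⊆ Set.Ico l r) :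
    Respects ({l} ∪ {r} ∪ Set.range P.e ∪ (⇑P.U.symm '' D)) (⇑P.U ⁻¹' E) := by
  intro x y hxy hD
  have hl : l ∈ ({l} ∪ {r} ∪ Set.range P.e ∪ (⇑P.U.symm '' D) : Set ℝ) := by simp
  have hr : r ∈ ({l} ∪ {r} ∪ Set.range P.e ∪ (⇑P.U.symm '' D) : Set ℝ) := by simp
  by_cases hx : x ∈ Set.Ico l r <;> by_cases hy : y ∈ Set.Ico l r
  · -- both in [l,r)
    obtain ⟨i, hxi⟩ := P.cover x hx
    have hyi : y ∈ Set.Ico (P.e i) (P.e i + P.len i) := by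
      refine ⟨le_trans hxi.1 hxy, ?_⟩
      by_contra hcon
      push_neg at hcon
      rcases P.succ i with hsr | ⟨j, hj⟩
      · rw [hsr] at hcon
        exact absurd hy.2 (not_lt.2 hcon)
      · exact hD (P.e j) (Or.inl (Or.inr ⟨j, rfl⟩)) ⟨hj ▸ hxi.2, hj ▸ hcon⟩
    rw [Set.mem_preimage, Set.mem_preimage, P.trans i x hxi, P.trans i y hyi]
    refine hE (x + P.a i) (y + P.a i) (by linarith) ?_
    rintro t ht ⟨ht1, ht2⟩
    have hw : t - P.a i ∈ Set.Ico (P.e i) (P.e i + P.len i) :=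
      ⟨by linarith [hxi.1], by linarith [hyi.2]⟩
    have hUt : P.U (t - P.a i) = t := by rw [P.trans i _ hw]; ring
    have : P.U.symm t = t - P.a i := by rw [Equiv.symm_apply_eq]; exact hUt.symm
    exact hD (t - P.a i) (Or.inr ⟨t, ht, this⟩) ⟨by linarith, by linarith⟩
  · -- x in, y out
    exfalso
    have hry : r ≤ y := by
      rcases not_and_or.1 hy with h | h
      · exact absurd (le_trans hx.1 hxy) h
      · exact not_lt.1 h
    exact hD r hr ⟨hx.2, hry⟩
  · -- x out, y in
    exfalso
    rcases not_and_or.1 hx with h | h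
    · exact hD l hl ⟨not_le.1 h, hy.1⟩
    · exact absurd hy.2 (not_lt.2 (le_trans (not_lt.1 h) hxy))
  · -- both out
    rw [Set.mem_preimage, Set.mem_preimage, P.id_out x hx, P.id_out y hy]
    constructor
    · intro h; exact absurd (hEsub h) hx
    · intro h; exact absurd (hEsub h) hy

lemma decomp (B : Set ℝ) :
    ⇑P.U ⁻¹' B = (B \ Set.Ico l r) ∪
      ⋃ i, ((fun z => z + P.a i) ⁻¹' B ∩ Set.Ico (P.e i) (P.e i + P.len i)) := by
  ext z
  constructor
  · intro hz
    rw [Set.mem_preimage] at hz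
    by_cases h : z ∈ Set.Ico l r
    · obtain ⟨i, hi⟩ := P.cover z h
      right
      exact Set.mem_iUnion.2 ⟨i, ⟨by rw [Set.mem_preimage, ← P.trans i z hi]; exact hz, hi⟩⟩
    · left
      rw [P.id_out z h] at hz
      exact ⟨hz, h⟩
  · rintro (⟨hB, hIco⟩ | hU)
    · rw [Set.mem_preimage, P.id_out z hIco]; exact hB
    · obtain ⟨i, hzB, hzP⟩ := Set.mem_iUnion.1 hU
      rw [Set.mem_preimage, P.trans i z hzP]
      exact hzB

lemma measurable : Measurable ⇑P.U := by
  intro B hB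
  rw [P.decomp B]
  refine (hB.diff measurableSet_Ico).union (MeasurableSet.iUnion fun i => ?_)
  exact ((measurable_add_const (P.a i)) hB).inter measurableSet_Ico

lemma vol_preimage {B : Set ℝ} (hB : MeasurableSet B) : volume (⇑P.U ⁻¹' B) = volume B := by
  rw [P.decomp B]
  have hpiece : ∀ i, (fun z => z + P.a i) ⁻¹' B ∩ Set.Ico (P.e i) (P.e i + P.len i)
      = (fun z => z + P.a i) ⁻¹' (B ∩ Set.Ico (P.e i + P.a i) (P.e i + P.len i + P.a i)) := by
    intro i
    ext z
    simp only [Set.mem_inter_iff, Set.mem_preimage, Set.mem_Ico]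
    constructor
    · rintro ⟨h1, h2, h3⟩; exact ⟨h1, by linarith, by linarith⟩
    · rintro ⟨h1, h2, h3⟩; exact ⟨h1, by linarith, by linarith⟩
  have hdisj : Disjoint (B \ Set.Ico l r)
      (⋃ i, ((fun z => z + P.a i) ⁻¹' B ∩ Set.Ico (P.e i) (P.e i + P.len i))) := by
    rw [Set.disjoint_left]
    rintro z ⟨_, hz2⟩ hz3
    obtain ⟨i, _, hi2⟩ := Set.mem_iUnion.1 hz3
    exact hz2 (P.sub i hi2)
  rw [measure_union hdisj (MeasurableSet.iUnion fun i =>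
    ((measurable_add_const (P.a i)) hB).inter measurableSet_Ico)]
  rw [measure_iUnion ?_ (fun i => ((measurable_add_const (P.a i)) hB).inter measurableSet_Ico)]
  · have hterm : ∀ i, volume ((fun z => z + P.a i) ⁻¹' B ∩ Set.Ico (P.e i) (P.e i + P.len i))
        = volume (B ∩ Set.Ico (P.e i + P.a i) (P.e i + P.len i + P.a i)) := by
      intro i
      rw [hpiece i]
      exact measure_preimage_add_right volume (P.a i) _
    rw [tsum_congr hterm]
    have himg : (⋃ i, (B ∩ Set.Ico (P.e i + P.a i) (P.e i + P.len i + P.a i)))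
        = B ∩ Set.Ico l r := by
      ext z
      constructor
      · intro hz
        obtain ⟨i, h1, h2⟩ := Set.mem_iUnion.1 hz
        exact ⟨h1, P.img_sub i h2⟩
      · rintro ⟨h1, h2⟩
        obtain ⟨i, hi⟩ := P.img_cover z h2
        exact Set.mem_iUnion.2 ⟨i, h1, hi⟩
    have hsum : ∑' i, volume (B ∩ Set.Ico (P.e i + P.a i) (P.e i + P.len i + P.a i))
        = volume (B ∩ Set.Ico l r) := by
      rw [← himg]
      exact (measure_iUnion (fun i j hij => ((P.img_disj i j hij).mono
        Set.inter_subset_right Set.inter_subset_right))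
        (fun i => hB.inter measurableSet_Ico)).symm
    rw [hsum]
    rw [add_comm]
    exact measure_inter_add_diff B measurableSet_Ico
  · intro i j hij
    exact (P.disj i j hij).mono Set.inter_subset_right Set.inter_subset_right

end PT

section Tiling

variable {s : ℕ} {l r : ℝ} {μ : Fin s → ℝ}

def cum (l : ℝ) {s : ℕ} (μ : Fin s → ℝ) : ℕ → ℝ :=
  fun k => l + ∑ j ∈ Finset.range k, (if h : j < s then μ ⟨j, h⟩ else 1)

lemma cum_zero : cum l μ 0 = l := by simp [cum]

lemma cum_succ_lt {k : ℕ} (hk : k < s) : cum l μ (k + 1) = cum l μ k + μ ⟨k, hk⟩ := by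
  unfold cum; rw [Finset.sum_range_succ, dif_pos hk]; ring

lemma cum_succ_ge {k : ℕ} (hk : ¬ k < s) : cum l μ (k + 1) = cum l μ k + 1 := by
  unfold cum; rw [Finset.sum_range_succ, dif_neg hk]; ring

lemma cum_strictMono (hpos : ∀ i, 0 < μ i) : StrictMono (cum l μ) := by
  apply strictMono_nat_of_lt_succ
  intro k
  by_cases hk : k < s
  · rw [cum_succ_lt hk]; linarith [hpos ⟨k, hk⟩]
  · rw [cum_succ_ge hk]; linarith

lemma sepPt_eq_cum (i : Fin s) : sepPt l μ i = cum l μ i.val := by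
  unfold sepPt cum
  congr 1
  refine Finset.sum_bij' (fun (j : Fin s) _ => (j : ℕ))
    (fun (k : ℕ) hk => (⟨k, lt_trans (Finset.mem_range.1 hk) i.isLt⟩ : Fin s))
    ?_ ?_ ?_ ?_ ?_
  · intro j hj
    simp only [Finset.mem_filter, Finset.mem_univ, true_and] at hj
    exact Finset.mem_range.2 hj
  · intro k hk
    simp only [Finset.mem_filter, Finset.mem_univ, true_and]
    exact Finset.mem_range.1 hk
  · intro j hj; rfl
  · intro k hk; rfl
  · intro j hj
    rw [dif_pos j.isLt]

lemma cum_last (hsum : ∑ i, μ i = r - l) : cum l μ s = r := by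
  unfold cum
  have h1 : ∑ j ∈ Finset.range s, (if h : j < s then μ ⟨j, h⟩ else 1)
      = ∑ i : Fin s, μ i := by
    rw [← Fin.sum_univ_eq_sum_range]
    exact Finset.sum_congr rfl (fun i _ => by rw [dif_pos i.isLt])
  rw [h1, hsum]; ring

lemma cum_cover (hpos : ∀ i, 0 < μ i) (hsum : ∑ i, μ i = r - l) {z : ℝ}
    (hz1 : l ≤ z) (hz2 : z < r) :
    ∃ k : ℕ, k < s ∧ cum l μ k ≤ z ∧ z < cum l μ (k + 1) := by
  classical
  set k := Nat.findGreatest (fun k => cum l μ k ≤ z) s with hkdef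
  have hP0 : cum l μ 0 ≤ z := by rw [cum_zero]; exact hz1
  have hks : k ≤ s := Nat.findGreatest_le s
  have hPk : cum l μ k ≤ z := Nat.findGreatest_spec (P := fun k => cum l μ k ≤ z) (Nat.zero_le s) hP0
  have hklt : k < s := by
    rcases lt_or_eq_of_le hks with h | h
    · exact h
    · exfalso; rw [h, cum_last hsum] at hPk; linarith
  refine ⟨k, hklt, hPk, ?_⟩
  by_contra hcon
  push_neg at hcon
  exact Nat.findGreatest_is_greatest (P := fun k => cum l μ k ≤ z) (Nat.lt_succ_self k) (by omega) hcon

lemma tile_sub (hpos : ∀ i, 0 < μ i) (hsum : ∑ i, μ i = r - l) (i : Fin s) :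
    Set.Ico (sepPt l μ i) (sepPt l μ i + μ i) ⊆ Set.Ico l r := by
  rintro z ⟨h1, h2⟩
  have e1 : sepPt l μ i = cum l μ i.val := sepPt_eq_cum i
  have e2 : sepPt l μ i + μ i = cum l μ (i.val + 1) := by
    rw [e1, cum_succ_lt i.isLt]
  have mono := (cum_strictMono (l := l) hpos).monotone
  constructor
  · calc l = cum l μ 0 := cum_zero.symm
    _ ≤ cum l μ i.val := mono (Nat.zero_le _)
    _ ≤ z := by rw [← e1]; exact h1
  · calc z < cum l μ (i.val + 1) := by rw [← e2]; exact h2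
    _ ≤ cum l μ s := mono i.isLt
    _ = r := cum_last hsum

lemma tile_cover (hpos : ∀ i, 0 < μ i) (hsum : ∑ i, μ i = r - l) :
    ∀ z ∈ Set.Ico l r, ∃ i : Fin s, z ∈ Set.Ico (sepPt l μ i) (sepPt l μ i + μ i) := by
  rintro z ⟨hz1, hz2⟩
  obtain ⟨k, hk, h1, h2⟩ := cum_cover hpos hsum hz1 hz2
  refine ⟨⟨k, hk⟩, ?_, ?_⟩
  · rw [sepPt_eq_cum]; exact h1
  · rw [sepPt_eq_cum, ← cum_succ_lt hk]; exact h2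

lemma tile_disj (hpos : ∀ i, 0 < μ i) :
    ∀ i j : Fin s, i ≠ j → Disjoint (Set.Ico (sepPt l μ i) (sepPt l μ i + μ i))
      (Set.Ico (sepPt l μ j) (sepPt l μ j + μ j)) := by
  have key : ∀ i j : Fin s, (i : ℕ) < j →
      Disjoint (Set.Ico (sepPt l μ i) (sepPt l μ i + μ i))
        (Set.Ico (sepPt l μ j) (sepPt l μ j + μ j)) := by
    intro i j hij
    rw [Set.disjoint_left]
    rintro z ⟨h1, h2⟩ ⟨h3, h4⟩
    have e2 : sepPt l μ i + μ i = cum l μ (i.val + 1) := by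
      rw [sepPt_eq_cum, cum_succ_lt i.isLt]
    have mono := (cum_strictMono (l := l) hpos).monotone
    have : cum l μ (i.val + 1) ≤ cum l μ j.val := mono hij
    rw [e2] at h2
    rw [sepPt_eq_cum] at h3
    linarith
  intro i j hij
  rcases lt_or_gt_of_ne (fun h : (i : ℕ) = (j : ℕ) => hij (Fin.ext h)) with h | h
  · exact key i j h
  · exact (key j i h).symm

lemma tile_succ (hsum : ∑ i, μ i = r - l) (i : Fin s) :
    sepPt l μ i + μ i = r ∨ ∃ j : Fin s, sepPt l μ j = sepPt l μ i + μ i := by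
  have e2 : sepPt l μ i + μ i = cum l μ (i.val + 1) := by
    rw [sepPt_eq_cum, cum_succ_lt i.isLt]
  by_cases h : i.val + 1 < s
  · right
    exact ⟨⟨i.val + 1, h⟩, by rw [sepPt_eq_cum, e2]⟩
  · left
    have : i.val + 1 = s := by omega
    rw [e2, this, cum_last hsum]

lemma imgPt_eq_sepPt {π : Equiv.Perm (Fin s)} (len : Fin s → ℝ) (i : Fin s) :
    imgPt l len π i = sepPt l (len ∘ π.symm) (π i) := by
  unfold imgPt sepPt
  congr 1
  refine Finset.sum_equiv π ?_ ?_
  · intro j; simp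
  · intro j hj; simp

end Tiling

section Build

variable {s : ℕ} {l r : ℝ} {len : Fin s → ℝ} {π : Equiv.Perm (Fin s)} {T : Equiv.Perm ℝ}

lemma hpos' (h : IsIET s l r len π T) : ∀ k, 0 < (len ∘ π.symm) k := fun k => h.2.1 _

lemma hsum' (h : IsIET s l r len π T) : ∑ k, (len ∘ π.symm) k = r - l := by
  have := Equiv.sum_comp π.symm len
  simpa [Function.comp] using this.trans h.2.2.1

lemma img_piece_eq (i : Fin s) :
    Set.Ico (sepPt l len i + (imgPt l len π i - sepPt l len i))
      (sepPt l len i + len i + (imgPt l len π i - sepPt l len i))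
    = Set.Ico (sepPt l (len ∘ π.symm) (π i))
        (sepPt l (len ∘ π.symm) (π i) + (len ∘ π.symm) (π i)) := by
  have e1 : sepPt l (len ∘ π.symm) (π i) = imgPt l len π i := (imgPt_eq_sepPt len i).symm
  have e2 : (len ∘ π.symm) (π i) = len i := by simp
  rw [e1, e2]
  congr 1 <;> ring

/-- The forward piecewise-translation structure of an IET. -/
def IsIET.fwd (h : IsIET s l r len π T) : PT l r where
  U := T
  s := s
  e := sepPt l len
  len := len
  a := fun i => imgPt l len π i - sepPt l len i
  hlr := h.1
  id_out := h.2.2.2.1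
  trans := fun i z hz => h.2.2.2.2 i z hz
  cover := tile_cover h.2.1 h.2.2.1
  sub := tile_sub h.2.1 h.2.2.1
  disj := tile_disj h.2.1
  succ := tile_succ h.2.2.1
  img_cover := by
    intro z hz
    obtain ⟨k, hk⟩ := tile_cover (hpos' h) (hsum' h) z hz
    refine ⟨π.symm k, ?_⟩
    rw [img_piece_eq (π.symm k)]
    simpa using hk
  img_disj := by
    intro i j hij
    rw [img_piece_eq i, img_piece_eq j]
    exact tile_disj (hpos' h) (π i) (π j) (fun hc => hij (π.injective hc))

/-- The backward piecewise-translation structure of an IET. -/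
def IsIET.bwd (h : IsIET s l r len π T) : PT l r where
  U := T.symm
  s := s
  e := fun k => sepPt l (len ∘ π.symm) k
  len := len ∘ π.symm
  a := fun k => -(imgPt l len π (π.symm k) - sepPt l len (π.symm k))
  hlr := h.1
  id_out := fun z hz => by rw [Equiv.symm_apply_eq]; exact (h.2.2.2.1 z hz).symm
  trans := by
    intro k z hz
    have e1 : sepPt l (len ∘ π.symm) k = imgPt l len π (π.symm k) := by
      rw [imgPt_eq_sepPt len (π.symm k), Equiv.apply_symm_apply]
    have e2 : (len ∘ π.symm) k = len (π.symm k) := rfl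
    obtain ⟨h1, h2⟩ := hz
    simp only [e1, e2] at h1 h2
    have hzi : z - (imgPt l len π (π.symm k) - sepPt l len (π.symm k))
        ∈ Set.Ico (sepPt l len (π.symm k)) (sepPt l len (π.symm k) + len (π.symm k)) :=
      ⟨by linarith, by linarith⟩
    have hU := h.2.2.2.2 (π.symm k) _ hzi
    show T.symm z = z + -(imgPt l len π (π.symm k) - sepPt l len (π.symm k))
    rw [Equiv.symm_apply_eq]
    have e3 : z + -(imgPt l len π (π.symm k) - sepPt l len (π.symm k))
        = z - (imgPt l len π (π.symm k) - sepPt l len (π.symm k)) := by ring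
    rw [e3, hU]
    ring
  cover := tile_cover (hpos' h) (hsum' h)
  sub := tile_sub (hpos' h) (hsum' h)
  disj := tile_disj (hpos' h)
  succ := tile_succ (hsum' h)
  img_cover := by
    intro z hz
    obtain ⟨i, hi⟩ := tile_cover h.2.1 h.2.2.1 z hz
    refine ⟨π i, ?_⟩
    have e1 : sepPt l (len ∘ π.symm) (π i) = imgPt l len π i := (imgPt_eq_sepPt len i).symm
    have e2 : (len ∘ π.symm) (π i) = len i := by simp
    simp only [Equiv.symm_apply_apply, e1, e2]
    obtain ⟨h1, h2⟩ := hi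
    constructor <;> [linarith; linarith]
  img_disj := by
    intro k k' hkk
    have key : ∀ k : Fin s,
        Set.Ico (sepPt l (len ∘ π.symm) k + -(imgPt l len π (π.symm k) - sepPt l len (π.symm k)))
          (sepPt l (len ∘ π.symm) k + (len ∘ π.symm) k
            + -(imgPt l len π (π.symm k) - sepPt l len (π.symm k)))
        = Set.Ico (sepPt l len (π.symm k)) (sepPt l len (π.symm k) + len (π.symm k)) := by
      intro k
      have e1 : sepPt l (len ∘ π.symm) k = imgPt l len π (π.symm k) := by
        rw [imgPt_eq_sepPt len (π.symm k), Equiv.apply_symm_apply]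
      have e2 : (len ∘ π.symm) k = len (π.symm k) := rfl
      rw [e1, e2]
      congr 1 <;> ring
    rw [key k, key k']
    exact tile_disj h.2.1 (π.symm k) (π.symm k') (fun hc => hkk (π.symm.injective hc))

end Build

/-- A set that is right-open together with its complement respects its frontier. -/
lemma respects_frontier {S : Set ℝ}
    (hro : ∀ x ∈ S, ∃ ε > 0, Set.Ico x (x + ε) ⊆ S)
    (hro' : ∀ x ∉ S, ∃ ε > 0, ∀ u ∈ Set.Ico x (x + ε), u ∉ S) :
    Respects (frontier S) S := by
  intro x y hxy hD
  rcases eq_or_lt_of_le hxy with rfl | hxy'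
  · exact Iff.rfl
  constructor
  · intro hx
    by_contra hy
    set A := {u : ℝ | u ∈ Set.Icc x y ∧ u ∉ S} with hA
    have hAne : A.Nonempty := ⟨y, ⟨⟨hxy, le_refl y⟩, hy⟩⟩
    have hAbdd : BddBelow A := ⟨x, fun u hu => hu.1.1⟩
    set t := sInf A with ht
    have hty : t ≤ y := csInf_le hAbdd ⟨⟨hxy, le_refl y⟩, hy⟩
    obtain ⟨ε, hε, hsub⟩ := hro x hx
    have hxt : x < t := by
      have h1 : ∀ u ∈ A, x + ε ≤ u := by
        intro u hu
        by_contra hc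
        push_neg at hc
        exact hu.2 (hsub ⟨hu.1.1, hc⟩)
      linarith [le_csInf hAne h1]
    have htfront : t ∈ frontier S := by
      rw [frontier_eq_closure_inter_closure]
      constructor
      · have hIco : Set.Ico x t ⊆ S := by
          intro u hu
          by_contra hc
          have : u ∈ A := ⟨⟨hu.1, le_trans (le_of_lt hu.2) hty⟩, hc⟩
          exact absurd (csInf_le hAbdd this) (not_le.2 hu.2)
        have h2 : t ∈ closure (Set.Ico x t) := by
          rw [closure_Ico (ne_of_lt hxt)]
          exact ⟨le_of_lt hxt, le_refl t⟩
        exact closure_mono hIco h2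
      · have h3 : t ∈ closure A := csInf_mem_closure hAne hAbdd
        exact closure_mono (fun u hu => hu.2) h3
    exact absurd ⟨hxt, hty⟩ (hD t htfront)
  · intro hy
    by_contra hx
    set A := {u : ℝ | u ∈ Set.Icc x y ∧ u ∈ S} with hA
    have hAne : A.Nonempty := ⟨y, ⟨⟨hxy, le_refl y⟩, hy⟩⟩
    have hAbdd : BddBelow A := ⟨x, fun u hu => hu.1.1⟩
    set t := sInf A with ht
    have hty : t ≤ y := csInf_le hAbdd ⟨⟨hxy, le_refl y⟩, hy⟩
    obtain ⟨ε, hε, hsub⟩ := hro' x hx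
    have hxt : x < t := by
      have h1 : ∀ u ∈ A, x + ε ≤ u := by
        intro u hu
        by_contra hc
        push_neg at hc
        exact hsub u ⟨hu.1.1, hc⟩ hu.2
      linarith [le_csInf hAne h1]
    have htfront : t ∈ frontier S := by
      rw [frontier_eq_closure_inter_closure]
      constructor
      · have h3 : t ∈ closure A := csInf_mem_closure hAne hAbdd
        exact closure_mono (fun u hu => hu.2) h3
      · have hIco : Set.Ico x t ⊆ Sᶜ := by
          intro u hu
          intro hc
          have : u ∈ A := ⟨⟨hu.1, le_trans (le_of_lt hu.2) hty⟩, hc⟩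
          exact absurd (csInf_le hAbdd this) (not_le.2 hu.2)
        have h2 : t ∈ closure (Set.Ico x t) := by
          rw [closure_Ico (ne_of_lt hxt)]
          exact ⟨le_of_lt hxt, le_refl t⟩
        exact closure_mono hIco h2
    exact absurd ⟨hxt, hty⟩ (hD t htfront)

/-- Discrete harmonic-sum lower bound via logarithms. -/
lemma harmonic_log_bound {A Q : ℝ} (hA : 0 < A) (hQ : 0 < Q) (N : ℕ) :
    (Real.log (Q + (N + 1) * A) - Real.log (Q + A)) / A
      ≤ ∑ n ∈ Finset.range N, 1 / (Q + (n + 1) * A) := by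
  induction N with
  | zero => simp
  | succ N ih =>
    rw [Finset.sum_range_succ]
    have hx : (0:ℝ) < Q + (N + 1) * A := by positivity
    have hlog : Real.log (Q + ((N:ℝ) + 2) * A) - Real.log (Q + ((N:ℝ) + 1) * A)
        ≤ A / (Q + ((N:ℝ) + 1) * A) := by
      have h1 : Real.log (Q + ((N:ℝ) + 2) * A) - Real.log (Q + ((N:ℝ) + 1) * A)
          = Real.log ((Q + ((N:ℝ) + 2) * A) / (Q + ((N:ℝ) + 1) * A)) := by
        rw [Real.log_div (by positivity) (ne_of_gt hx)]
      rw [h1]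
      have h2 : (Q + ((N:ℝ) + 2) * A) / (Q + ((N:ℝ) + 1) * A) > 0 := by positivity
      have h3 := Real.log_le_sub_one_of_pos h2
      have h4 : (Q + ((N:ℝ) + 2) * A) / (Q + ((N:ℝ) + 1) * A) - 1
          = A / (Q + ((N:ℝ) + 1) * A) := by
        field_simp
        ring
      linarith
    have hc : (((N + 1 : ℕ)) : ℝ) + 1 = (N:ℝ) + 2 := by push_cast; ring
    rw [hc]
    set SN := ∑ n ∈ Finset.range N, 1 / (Q + ((n:ℝ) + 1) * A) with hSN
    rw [div_le_iff₀ hA] at ih ⊢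
    have e1 : (SN + 1 / (Q + ((N:ℝ) + 1) * A)) * A = SN * A + A / (Q + ((N:ℝ) + 1) * A) := by
      field_simp
    rw [e1]
    linarith [hlog, ih]

lemma harmonic_count_bound {A Q M : ℝ} (hA : 0 < A) (hQ : 0 < Q) {N : ℕ}
    (h : ∑ n ∈ Finset.range N, 1 / (Q + (n + 1) * A) ≤ M) :
    (N : ℝ) ≤ (Q + A) * Real.exp (A * M) / A := by
  have h1 := le_trans (harmonic_log_bound hA hQ N) h
  have h2 : Real.log (Q + (N + 1) * A) ≤ Real.log (Q + A) + A * M := by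
    rw [div_le_iff₀ hA] at h1
    linarith
  have h3 : Q + (N + 1) * A ≤ (Q + A) * Real.exp (A * M) := by
    have e1 : Q + ((N:ℝ) + 1) * A = Real.exp (Real.log (Q + (N + 1) * A)) := by
      rw [Real.exp_log (by positivity)]
    have e2 : (Q + A) * Real.exp (A * M) = Real.exp (Real.log (Q + A) + A * M) := by
      rw [Real.exp_add, Real.exp_log (by positivity)]
    rw [e1, e2]
    exact Real.exp_le_exp.2 h2
  rw [le_div_iff₀ hA]
  nlinarith

/-- Powers of a measurable volume-preserving bijection. -/
lemma pow_meas_vol {U : Equiv.Perm ℝ} (hm : Measurable ⇑U)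
    (hv : ∀ B : Set ℝ, MeasurableSet B → volume (⇑U ⁻¹' B) = volume B) (k : ℕ) :
    Measurable ⇑(U ^ k) ∧
      ∀ B : Set ℝ, MeasurableSet B → volume (⇑(U ^ k) ⁻¹' B) = volume B := by
  induction k with
  | zero =>
    constructor
    · simpa using measurable_id
    · intro B hB; simp
  | succ k ih =>
    have hcomp : ⇑(U ^ (k + 1)) = ⇑(U ^ k) ∘ ⇑U := by
      ext z
      rw [pow_succ]
      rfl
    constructor
    · rw [hcomp]; exact ih.1.comp hm
    · intro B hB
      have : ⇑(U ^ (k + 1)) ⁻¹' B = ⇑U ⁻¹' (⇑(U ^ k) ⁻¹' B) := by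
        rw [hcomp, Set.preimage_comp]
      rw [this, hv _ (ih.1 hB), ih.2 B hB]

set_option maxHeartbeats 1000000 in
/-- For a minimal interval exchange transformation defined over
`ℤ[√d]` there is `C > 0` such that for every `S ∈ A([l,r))` the maximal return
times exist and satisfy `ρ±(S) ≤ C ⬝ Ψ(S)`, and the minimal return times satisfy
`σ±(S) ≤ C / |S|`. -/
theorem return_time_bounds (d : ℤ) (hd : 2 ≤ d) (hsf : Squarefree d)
    (s : ℕ) (l r : ℝ) (len : Fin s → ℝ) (π : Equiv.Perm (Fin s)) (T : Equiv.Perm ℝ)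
    (hIET : IsIET s l r len π T) (hmin : IsMinimalOn T l r)
    (hdef : DefinedOverZ d s l r len π) :
    ∃ C : ℝ, 0 < C ∧ ∀ S : Set ℝ, MemA d l r S →
      {n : ℕ | 1 ≤ n ∧ ⇑(T ^ n) '' S ⊆ ⋃ i ∈ Finset.range n, ⇑(T ^ i) '' S}.Nonempty ∧
      {m : ℕ | 1 ≤ m ∧ ⇑(T ^ m) '' S ⊆ ⋃ i ∈ Finset.range m, ⇑(T⁻¹ ^ i) '' S}.Nonempty ∧
      (rhoPlusSet T S : ℝ) ≤ C * (PsiSet d S : ℝ) ∧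
      (rhoMinusSet T S : ℝ) ≤ C * (PsiSet d S : ℝ) ∧
      (sigmaPlusSet T S : ℝ) ≤ C / (volume S).toReal ∧
      (sigmaMinusSet T S : ℝ) ≤ C / (volume S).toReal := by
  classical
  have hirr := sqrtd_irr hd hsf
  have hlr : l < r := hIET.1
  have hsp := sqrtd_pos hd
  obtain ⟨hlZ, hrZ, hsepZ⟩ := hdef
  -- constants
  set A : ℕ := Finset.univ.sup (fun i : Fin s => PsiNum d (imgPt l len π i - sepPt l len i))
    with hA
  set Gn : ℕ := Finset.univ.sup (fun i : Fin s => PsiNum d (sepPt l len i)) with hGn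
  set B0 : ℕ := max (max (PsiNum d l) (PsiNum d r)) (Gn + A) with hB0
  set Am : ℕ := A + 1 with hAm
  set c0 : ℝ := (1 + Real.sqrt d) * 2 with hc0
  have hc0pos : (0:ℝ) < c0 := by rw [hc0]; nlinarith
  have hAmpos : (0:ℝ) < (Am:ℝ) := by
    have : 0 < Am := by omega
    exact_mod_cast this
  set K : ℝ := Real.exp ((c0 * (Am:ℝ)) * (r - l)) with hK
  have hKpos : 0 < K := Real.exp_pos _
  set C : ℝ := ((B0:ℝ) + 1 + (Am:ℝ)) * K / (Am:ℝ) + 2 + (r - l) with hC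
  have hCterm : 0 < ((B0:ℝ) + 1 + (Am:ℝ)) * K / (Am:ℝ) := by
    apply div_pos ?_ hAmpos
    have : (0:ℝ) ≤ (B0:ℝ) := Nat.cast_nonneg _
    nlinarith
  have hCpos : 0 < C := by rw [hC]; linarith
  refine ⟨C, hCpos, ?_⟩
  rintro S ⟨hSne, hSsub, k, a, b, hab, hSrep⟩
  -- basic facts on S
  have hSmeas : MeasurableSet S := by
    rw [hSrep]; exact MeasurableSet.iUnion (fun j => measurableSet_Ico)
  obtain ⟨z0, hz0⟩ := hSne
  have hz0' := hz0
  rw [hSrep] at hz0'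
  obtain ⟨j0, hj0⟩ : ∃ j, z0 ∈ Set.Ico (a j) (b j) := by simpa using hz0'
  have hvolS_ne_top : volume S ≠ ⊤ := by
    refine ne_top_of_le_ne_top ?_ (measure_mono hSsub)
    rw [Real.volume_Ico]
    exact ENNReal.ofReal_ne_top
  have hvolS_pos : 0 < (volume S).toReal := by
    refine ENNReal.toReal_pos ?_ hvolS_ne_top
    intro h0
    have h1 : volume (Set.Ico (a j0) (b j0)) ≤ volume S :=
      measure_mono (by rw [hSrep]; exact Set.subset_iUnion (fun j => Set.Ico (a j) (b j)) j0)
    rw [h0, le_zero_iff, Real.volume_Ico, ENNReal.ofReal_eq_zero] at h1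
    linarith [(hab j0).2.2]
  -- frontier facts
  have hfrontsub : frontier S ⊆ ⋃ j, ({a j, b j} : Set ℝ) := by
    rw [hSrep]
    intro z hz
    have hcl : closure (⋃ j, Set.Ico (a j) (b j)) ⊆ ⋃ j, Set.Icc (a j) (b j) :=
      closure_minimal (Set.iUnion_mono fun j => Set.Ico_subset_Icc_self)
        (isClosed_iUnion_of_finite fun j => isClosed_Icc)
    have hint : ∀ j, Set.Ioo (a j) (b j) ⊆ interior (⋃ j, Set.Ico (a j) (b j)) := fun j =>
      interior_maximal ((Set.Ioo_subset_Ico_self).trans (Set.subset_iUnion (fun j => Set.Ico (a j) (b j)) j)) isOpen_Ioo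
    obtain ⟨j, hj⟩ := Set.mem_iUnion.1 (hcl hz.1)
    refine Set.mem_iUnion.2 ⟨j, ?_⟩
    have hnoo : z ∉ Set.Ioo (a j) (b j) := fun hzo => hz.2 (hint j hzo)
    simp only [Set.mem_Icc] at hj
    simp only [Set.mem_Ioo, not_and_or, not_lt] at hnoo
    simp only [Set.mem_insert_iff, Set.mem_singleton_iff]
    rcases hnoo with h | h
    · left; linarith
    · right; linarith
  have hfrontfin : (frontier S).Finite :=
    (Set.finite_iUnion fun j => (Set.finite_singleton (b j)).insert (a j)).subset hfrontsub
  have hfrontZ : ∀ t ∈ frontier S, t ∈ Zsd d := by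
    intro t ht
    obtain ⟨j, hj⟩ := Set.mem_iUnion.1 (hfrontsub ht)
    rcases hj with h | h
    · rw [h]; exact (hab j).1
    · rw [Set.mem_singleton_iff] at h; rw [h]; exact (hab j).2.1
  have hPsiFin : (PsiNum d '' frontier S).Finite := hfrontfin.image _
  have hfrontP : ∀ t ∈ frontier S, PsiNum d t ≤ PsiSet d S := fun t ht =>
    le_csSup hPsiFin.bddAbove (Set.mem_image_of_mem _ ht)
  set P : ℕ := PsiSet d S with hPdef
  have haS : a j0 ∈ S := by
    rw [hSrep]; exact Set.mem_iUnion.2 ⟨j0, ⟨le_refl _, (hab j0).2.2⟩⟩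
  have hmidS : (a j0 + b j0)/2 ∈ S := by
    rw [hSrep]
    exact Set.mem_iUnion.2 ⟨j0, ⟨by linarith [(hab j0).2.2], by linarith [(hab j0).2.2]⟩⟩
  have hP1 : 1 ≤ P := by
    by_contra hc
    have hP0 : P = 0 := by omega
    have hbddb : BddBelow S := ⟨l, fun z hz => (hSsub hz).1⟩
    have hbdda : BddAbove S := ⟨r, fun z hz => le_of_lt (hSsub hz).2⟩
    have hSne' : S.Nonempty := ⟨z0, hz0⟩
    have huf : sInf S ∈ frontier S := by
      constructor
      · exact csInf_mem_closure hSne' hbddb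
      · intro hui
        obtain ⟨ε, hε, hball⟩ := Metric.mem_nhds_iff.1 (mem_interior_iff_mem_nhds.1 hui)
        have hmem : sInf S - ε/2 ∈ S := by
          apply hball
          rw [Metric.mem_ball, Real.dist_eq]
          rw [show sInf S - ε/2 - sInf S = -(ε/2) by ring, abs_neg, abs_of_pos (by linarith)]
          linarith
        linarith [csInf_le hbddb hmem]
    have hvf : sSup S ∈ frontier S := by
      constructor
      · exact csSup_mem_closure hSne' hbdda
      · intro hui
        obtain ⟨ε, hε, hball⟩ := Metric.mem_nhds_iff.1 (mem_interior_iff_mem_nhds.1 hui)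
        have hmem : sSup S + ε/2 ∈ S := by
          apply hball
          rw [Metric.mem_ball, Real.dist_eq]
          rw [show sSup S + ε/2 - sSup S = ε/2 by ring, abs_of_pos (by linarith)]
          linarith
        linarith [le_csSup hbdda hmem]
    have huv : sInf S < sSup S := by
      have h1 : sInf S ≤ a j0 := csInf_le hbddb haS
      have h2 : (a j0 + b j0)/2 ≤ sSup S := le_csSup hbdda hmidS
      have := (hab j0).2.2
      linarith
    have hu0 : sInf S = 0 := PsiNum_eq_zero hirr (hfrontZ _ huf)
      (by have := hfrontP _ huf; omega)
    have hv0 : sSup S = 0 := PsiNum_eq_zero hirr (hfrontZ _ hvf)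
      (by have := hfrontP _ hvf; omega)
    rw [hu0, hv0] at huv
    exact lt_irrefl 0 huv
  -- right-openness and respect of the frontier
  have hSro : ∀ x ∈ S, ∃ ε > 0, Set.Ico x (x + ε) ⊆ S := by
    intro x hx
    rw [hSrep] at hx
    obtain ⟨j, hj⟩ := Set.mem_iUnion.1 hx
    refine ⟨b j - x, by linarith [hj.2], fun u hu => ?_⟩
    rw [hSrep]
    exact Set.mem_iUnion.2 ⟨j, ⟨le_trans hj.1 hu.1, by linarith [hu.2]⟩⟩
  have hSro' : ∀ x ∉ S, ∃ ε > 0, ∀ u ∈ Set.Ico x (x + ε), u ∉ S := by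
    intro x hx
    have hnot : ∀ j, x ∉ Set.Ico (a j) (b j) := fun j hj =>
      hx (by rw [hSrep]; exact Set.mem_iUnion.2 ⟨j, hj⟩)
    have hkne : Nonempty (Fin k) := ⟨j0⟩
    have hFne : (Finset.univ : Finset (Fin k)).Nonempty := Finset.univ_nonempty
    set ε := Finset.univ.inf' hFne (fun j => if x < a j then a j - x else 1) with hεdef
    refine ⟨ε, ?_, ?_⟩
    · rw [hεdef]
      refine (Finset.lt_inf'_iff hFne).2 (fun j _ => ?_)
      by_cases hxa : x < a j
      · rw [if_pos hxa]; linarith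
      · rw [if_neg hxa]; norm_num
    · intro u hu huS
      rw [hSrep] at huS
      obtain ⟨j, hj⟩ := Set.mem_iUnion.1 huS
      have hineq : ε ≤ (if x < a j then a j - x else 1) :=
        Finset.inf'_le _ (Finset.mem_univ j)
      by_cases hxa : x < a j
      · rw [if_pos hxa] at hineq
        have := hu.2
        have := hj.1
        linarith
      · push_neg at hxa
        have hxb : ¬ x < b j := fun h => hnot j ⟨hxa, h⟩
        have := hu.1
        have := hj.2
        linarith
  have hSresp : Respects (frontier S) S := respects_frontier hSro hSro'
  -- the point families Dn
  set Dbase : Set ℝ := {l} ∪ {r} ∪ Set.range (hIET.fwd.e) ∪ Set.range (hIET.bwd.e)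
    ∪ frontier S with hDbase
  obtain ⟨Dn, hDn0, hDnsucc⟩ : ∃ Dn : ℕ → Set ℝ, Dn 0 = Dbase ∧
      ∀ n, Dn (n+1) = Dn n ∪ (⇑T '' Dn n ∪ ⇑T.symm '' Dn n) :=
    ⟨fun n => Nat.rec Dbase (fun _ Dp => Dp ∪ (⇑T '' Dp ∪ ⇑T.symm '' Dp)) n, rfl,
      fun n => rfl⟩
  have hDfin : ∀ n, (Dn n).Finite := by
    intro n
    induction n with
    | zero =>
      rw [hDn0, hDbase]
      exact (((((Set.finite_singleton l).union (Set.finite_singleton r)).union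
        (Set.finite_range _)).union (Set.finite_range _)).union hfrontfin)
    | succ n ih =>
      rw [hDnsucc]
      exact ih.union ((ih.image _).union (ih.image _))
  have hDstep : ∀ n, Dn n ⊆ Dn (n+1) := fun n => by
    rw [hDnsucc]; exact Set.subset_union_left
  have hDmono : ∀ m n, m ≤ n → Dn m ⊆ Dn n := fun m n hmn =>
    monotone_nat_of_le_succ hDstep hmn
  have hDbase_sub : ∀ n, Dbase ⊆ Dn n := fun n => hDn0 ▸ hDmono 0 n (Nat.zero_le n)
  have hlD : ∀ n, l ∈ Dn n := fun n => hDbase_sub n (by rw [hDbase]; simp)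
  have hrD : ∀ n, r ∈ Dn n := fun n => hDbase_sub n (by rw [hDbase]; simp)
  -- Ψ bookkeeping
  have haZ : ∀ i, imgPt l len π i - sepPt l len i ∈ Zsd d := fun i => (hsepZ i).2
  have hsepZ' : ∀ i, sepPt l len i ∈ Zsd d := fun i => (hsepZ i).1
  have haA : ∀ i, PsiNum d (imgPt l len π i - sepPt l len i) ≤ A := fun i => by
    rw [hA]; exact Finset.le_sup (f := fun i => PsiNum d (imgPt l len π i - sepPt l len i)) (Finset.mem_univ i)
  have hsepG : ∀ i, PsiNum d (sepPt l len i) ≤ Gn := fun i => by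
    rw [hGn]; exact Finset.le_sup (f := fun i => PsiNum d (sepPt l len i)) (Finset.mem_univ i)
  have himgZ : ∀ i, imgPt l len π i ∈ Zsd d ∧ PsiNum d (imgPt l len π i) ≤ Gn + A := by
    intro i
    have h1 := PsiNum_add hirr (hsepZ' i) (haZ i)
    rw [show sepPt l len i + (imgPt l len π i - sepPt l len i) = imgPt l len π i
      from by ring] at h1
    exact ⟨h1.1, le_trans h1.2 (Nat.add_le_add (hsepG i) (haA i))⟩
  have hTstep : ∀ x q, x ∈ Zsd d → PsiNum d x ≤ q →
      (T x ∈ Zsd d ∧ PsiNum d (T x) ≤ q + Am) := by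
    intro x q hxZ hxq
    by_cases hx : x ∈ Set.Ico l r
    · obtain ⟨i, hi⟩ := tile_cover hIET.2.1 hIET.2.2.1 x hx
      have hTx : T x = x + (imgPt l len π i - sepPt l len i) := hIET.2.2.2.2 i x hi
      rw [hTx]
      have h1 := PsiNum_add hirr hxZ (haZ i)
      refine ⟨h1.1, le_trans h1.2 ?_⟩
      have := haA i
      omega
    · rw [hIET.2.2.2.1 x hx]; exact ⟨hxZ, by omega⟩
  have hTsymm_step : ∀ x q, x ∈ Zsd d → PsiNum d x ≤ q →
      (T.symm x ∈ Zsd d ∧ PsiNum d (T.symm x) ≤ q + Am) := by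
    intro x q hxZ hxq
    by_cases hx : x ∈ Set.Ico l r
    · obtain ⟨kk, hkk⟩ := tile_cover (hpos' hIET) (hsum' hIET) x hx
      have hTx : T.symm x = x + -(imgPt l len π (π.symm kk) - sepPt l len (π.symm kk)) :=
        hIET.bwd.trans kk x hkk
      rw [hTx, show x + -(imgPt l len π (π.symm kk) - sepPt l len (π.symm kk))
        = x - (imgPt l len π (π.symm kk) - sepPt l len (π.symm kk)) from by ring]
      have h1 := PsiNum_sub hirr hxZ (haZ (π.symm kk))
      refine ⟨h1.1, le_trans h1.2 ?_⟩
      have := haA (π.symm kk)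
      omega
    · have hid : T.symm x = x := by
        rw [Equiv.symm_apply_eq]
        exact (hIET.2.2.2.1 x hx).symm
      rw [hid]; exact ⟨hxZ, by omega⟩
  have hDZ : ∀ n, ∀ x ∈ Dn n, x ∈ Zsd d ∧ PsiNum d x ≤ (B0 + P) + n * Am := by
    intro n
    induction n with
    | zero =>
      intro x hx
      rw [hDn0, hDbase] at hx
      simp only [Set.mem_union, Set.mem_singleton_iff, Set.mem_range] at hx
      rcases hx with ((((hx | hx) | ⟨i, hx⟩) | ⟨i', hx⟩) | hf)
      · rw [hx]
        refine ⟨hlZ, ?_⟩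
        have h1 : PsiNum d l ≤ B0 := le_trans (le_max_left _ _) (le_max_left _ _)
        omega
      · rw [hx]
        refine ⟨hrZ, ?_⟩
        have h1 : PsiNum d r ≤ B0 := le_trans (le_max_right _ _) (le_max_left _ _)
        omega
      · have he : hIET.fwd.e i = sepPt l len i := rfl
        rw [← hx, he]
        refine ⟨hsepZ' i, ?_⟩
        have h1 := hsepG i
        have h2 : Gn + A ≤ B0 := le_max_right _ _
        omega
      · have he : hIET.bwd.e i' = imgPt l len π (π.symm i') := by
          show sepPt l (len ∘ π.symm) i' = _
          rw [imgPt_eq_sepPt len (π.symm i')]; exact congrArg (sepPt l (len ∘ π.symm)) (Equiv.apply_symm_apply π i').symm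
        rw [← hx, he]
        refine ⟨(himgZ _).1, ?_⟩
        have h1 := (himgZ (π.symm i')).2
        have h2 : Gn + A ≤ B0 := le_max_right _ _
        omega
      · refine ⟨hfrontZ x hf, ?_⟩
        have h1 := hfrontP x hf
        omega
    | succ n ih =>
      intro x hx
      rw [hDnsucc] at hx
      have hmulstep : (B0 + P) + n * Am + Am = (B0 + P) + (n+1) * Am := by ring
      rcases hx with hx | (⟨y, hy, rfl⟩ | ⟨y, hy, rfl⟩)
      · obtain ⟨h1, h2⟩ := ih x hx
        refine ⟨h1, le_trans h2 ?_⟩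
        have : n * Am ≤ (n+1) * Am := Nat.mul_le_mul_right _ (Nat.le_succ n)
        omega
      · obtain ⟨h1, h2⟩ := ih y hy
        have h3 := hTstep y _ h1 h2
        exact ⟨h3.1, by rw [← hmulstep]; exact h3.2⟩
      · obtain ⟨h1, h2⟩ := ih y hy
        have h3 := hTsymm_step y _ h1 h2
        exact ⟨h3.1, by rw [← hmulstep]; exact h3.2⟩
  -- the sets E_k and W_n
  set ES : Set ℝ := Set.Ico l r \ S with hES
  have hfrontDb : frontier S ⊆ Dbase := by rw [hDbase]; intro t ht; right; exact ht
  have hESresp : Respects (Dn 0) ES := by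
    rw [hDn0]
    exact (respects_Ico (by rw [hDbase]; simp) (by rw [hDbase]; simp)).diff
      (hSresp.mono hfrontDb)
  have hESsub : ES ⊆ Set.Ico l r := Set.diff_subset
  have hESmeas : MeasurableSet ES := measurableSet_Ico.diff hSmeas
  have hTmeas : Measurable ⇑T := hIET.fwd.measurable
  have hTvol : ∀ B : Set ℝ, MeasurableSet B → volume (⇑T ⁻¹' B) = volume B :=
    fun B hB => hIET.fwd.vol_preimage hB
  have hTsmeas : Measurable ⇑T.symm := hIET.bwd.measurable
  have hTsvol : ∀ B : Set ℝ, MeasurableSet B → volume (⇑T.symm ⁻¹' B) = volume B :=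
    fun B hB => hIET.bwd.vol_preimage hB
  have hTpow := pow_meas_vol hTmeas hTvol
  have hTspow := pow_meas_vol hTsmeas hTsvol
  have hmaps : ∀ (j : ℕ) z, z ∈ Set.Ico l r → (T ^ j) z ∈ Set.Ico l r := by
    intro j
    induction j with
    | zero => intro z hz; simpa using hz
    | succ j ih =>
      intro z hz
      rw [pow_succ, Equiv.Perm.mul_apply]
      exact ih _ (hIET.fwd.maps_Ico hz)
  have hmaps' : ∀ (j : ℕ) z, z ∈ Set.Ico l r → (T.symm ^ j) z ∈ Set.Ico l r := by
    intro j
    induction j with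
    | zero => intro z hz; simpa using hz
    | succ j ih =>
      intro z hz
      rw [pow_succ, Equiv.Perm.mul_apply]
      exact ih _ (hIET.bwd.maps_Ico hz)
  have hEk : ∀ kk : ℕ, Respects (Dn kk) (⇑(T ^ kk) ⁻¹' ES) ∧
      ⇑(T ^ kk) ⁻¹' ES ⊆ Set.Ico l r := by
    intro kk
    induction kk with
    | zero =>
      have h0 : ⇑(T ^ 0) ⁻¹' ES = ES := by simp
      rw [h0]
      exact ⟨hESresp.mono (hDmono 0 0 (le_refl 0)), hESsub⟩
    | succ kk ih =>
      have hsplit : ⇑(T ^ (kk+1)) ⁻¹' ES = ⇑T ⁻¹' (⇑(T ^ kk) ⁻¹' ES) := by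
        have hcomp : ⇑(T ^ (kk + 1)) = ⇑(T ^ kk) ∘ ⇑T := by
          ext z; rw [pow_succ]; rfl
        rw [hcomp, Set.preimage_comp]
      constructor
      · rw [hsplit]
        have hre := hIET.fwd.respects_preimage ih.1 ih.2
        refine hre.mono ?_
        intro t ht
        rcases ht with ((ht | ht) | ⟨i, rfl⟩) | ⟨y, hy, rfl⟩
        · exact hDmono 0 (kk+1) (Nat.zero_le _)
            (by rw [hDn0, hDbase]; exact Or.inl (Or.inl (Or.inl (Or.inl ht))))
        · exact hDmono 0 (kk+1) (Nat.zero_le _)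
            (by rw [hDn0, hDbase]; exact Or.inl (Or.inl (Or.inl (Or.inr ht))))
        · exact hDmono 0 (kk+1) (Nat.zero_le _)
            (by rw [hDn0, hDbase]; exact Or.inl (Or.inl (Or.inr ⟨i, rfl⟩)))
        · rw [hDnsucc]
          right; right
          exact ⟨y, hy, rfl⟩
      · rw [hsplit]
        exact hIET.fwd.preimage_sub ih.2
  obtain ⟨W, hW⟩ : ∃ W : ℕ → Set ℝ, ∀ n,
      W n = Set.Ico l r ∩ ⋂ jj ∈ Finset.Icc 1 n, ⇑(T ^ jj) ⁻¹' ES :=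
    ⟨_, fun _ => rfl⟩
  have hWsub : ∀ n, W n ⊆ Set.Ico l r := fun n => by rw [hW]; exact Set.inter_subset_left
  have hWmem : ∀ n z, z ∈ W n ↔ z ∈ Set.Ico l r ∧
      ∀ jj, 1 ≤ jj → jj ≤ n → (T ^ jj) z ∈ ES := by
    intro n z
    rw [hW]
    simp only [Set.mem_inter_iff, Set.mem_iInter, Finset.mem_Icc, Set.mem_preimage, and_imp]
  have hWresp : ∀ n, Respects (Dn n) (W n) := by
    intro n
    rw [hW]
    refine Respects.inter (respects_Ico (hlD n) (hrD n)) (Respects.biInter _ ?_)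
    intro jj hjj
    exact (hEk jj).1.mono (hDmono jj n (Finset.mem_Icc.1 hjj).2)
  have hWmeas : ∀ n, MeasurableSet (W n) := by
    intro n
    rw [hW]
    exact measurableSet_Ico.inter
      (Finset.measurableSet_biInter _ (fun jj _ => (hTpow jj).1 hESmeas))
  have hWanti : ∀ m n, m ≤ n → W n ⊆ W m := by
    intro m n hmn z hz
    rw [hWmem] at hz ⊢
    exact ⟨hz.1, fun jj h1 h2 => hz.2 jj h1 (le_trans h2 hmn)⟩
  have hWvol_ne_top : ∀ n, volume (W n) ≠ ⊤ := by
    intro n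
    refine ne_top_of_le_ne_top ?_ (measure_mono (hWsub n))
    rw [Real.volume_Ico]
    exact ENNReal.ofReal_ne_top
  -- the stabilization step
  have hstep : ∀ n, W (n+1) = W n → (W n ∩ S).Nonempty → False := by
    intro n heq ⟨z, hzW, hzS⟩
    have hTimg : ⇑T '' W n ⊆ W n \ S := by
      rintro w ⟨y, hy, rfl⟩
      rw [← heq] at hy
      rw [hWmem] at hy
      have hyIco := hy.1
      constructor
      · rw [hWmem]
        refine ⟨hIET.fwd.maps_Ico hyIco, ?_⟩
        intro jj h1 h2
        have h3 : (T ^ jj) (T y) = (T ^ (jj+1)) y := by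
          rw [pow_succ, Equiv.Perm.mul_apply]
        rw [h3]
        exact hy.2 (jj+1) (by omega) (by omega)
      · have h4 : T y = (T ^ 1) y := by simp
        have h5 := hy.2 1 (le_refl 1) (by omega)
        rw [← h4] at h5
        exact h5.2
    have himg_eq : ⇑T '' W n = ⇑T.symm ⁻¹' W n := Equiv.image_eq_preimage_symm T (W n)
    have hvolT : volume (⇑T '' W n) = volume (W n) := by
      rw [himg_eq]; exact hTsvol _ (hWmeas n)
    have hTWmeas : MeasurableSet (⇑T '' W n) := by
      rw [himg_eq]; exact hTsmeas (hWmeas n)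
    have hsubW : ⇑T '' W n ⊆ W n := hTimg.trans Set.diff_subset
    have hdiffnull : volume (W n \ ⇑T '' W n) = 0 := by
      rw [measure_diff hsubW hTWmeas.nullMeasurableSet
        (ne_top_of_le_ne_top (hWvol_ne_top n) (measure_mono hsubW)), hvolT, tsub_self]
    have hdiffresp : Respects (Dn (n+1)) (W n \ ⇑T '' W n) := by
      refine Respects.diff ((hWresp n).mono (hDstep n)) ?_
      rw [himg_eq]
      have hre := hIET.bwd.respects_preimage (hWresp n) (hWsub n)
      refine hre.mono ?_
      intro t ht
      rcases ht with ((ht | ht) | ⟨i, rfl⟩) | ⟨y, hy, rfl⟩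
      · exact hDmono 0 (n+1) (Nat.zero_le _)
          (by rw [hDn0, hDbase]; exact Or.inl (Or.inl (Or.inl (Or.inl ht))))
      · exact hDmono 0 (n+1) (Nat.zero_le _)
          (by rw [hDn0, hDbase]; exact Or.inl (Or.inl (Or.inl (Or.inr ht))))
      · exact hDmono 0 (n+1) (Nat.zero_le _)
          (by rw [hDn0, hDbase]; exact Or.inl (Or.inr ⟨i, rfl⟩))
      · rw [hDnsucc]
        right; left
        have hTT : hIET.bwd.U.symm y = T y := by
          show (T.symm).symm y = T y
          rw [Equiv.symm_symm]
        rw [hTT]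
        exact ⟨y, hy, rfl⟩
    have hempty : W n \ ⇑T '' W n = ∅ := by
      by_contra hne
      obtain ⟨w, hw⟩ := Set.nonempty_iff_ne_empty.2 hne
      obtain ⟨u, v, hu, hv, huw, hwv, hIcosub⟩ :=
        Respects.exists_Ico (hDfin (n+1)) (hlD (n+1)) (hrD (n+1)) hdiffresp
          ((Set.diff_subset).trans (hWsub n)) hw
      have hvol1 : volume (Set.Ico u v) ≤ volume (W n \ ⇑T '' W n) := measure_mono hIcosub
      rw [hdiffnull, le_zero_iff, Real.volume_Ico, ENNReal.ofReal_eq_zero] at hvol1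
      linarith [lt_of_le_of_lt huw hwv]
    have hWsubT : W n ⊆ ⇑T '' W n := Set.diff_eq_empty.1 hempty
    exact ((hTimg (hWsubT hzW)).2) hzS
  -- the decrement step
  have hdec : ∀ n, (W (n+1) ∩ S).Nonempty → ∃ u v : ℝ,
      Set.Ico u v ⊆ W n \ W (n+1) ∧ u < v ∧
      1 / (c0 * ((B0 + P : ℕ):ℝ) + ((n:ℝ) + 1) * (c0 * (Am:ℝ))) ≤ v - u := by
    intro n hne
    have hnS : (W n ∩ S).Nonempty := by
      obtain ⟨z, hz1, hz2⟩ := hne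
      exact ⟨z, hWanti n (n+1) (Nat.le_succ n) hz1, hz2⟩
    have hneq : W (n+1) ≠ W n := fun h => hstep n h hnS
    have hdiffne : (W n \ W (n+1)).Nonempty := by
      rcases Set.eq_empty_or_nonempty (W n \ W (n+1)) with h | h
      · exact absurd (Set.Subset.antisymm (hWanti n (n+1) (Nat.le_succ n))
          (Set.diff_eq_empty.1 h)) hneq
      · exact h
    obtain ⟨w, hw⟩ := hdiffne
    have hdresp : Respects (Dn (n+1)) (W n \ W (n+1)) :=
      Respects.diff ((hWresp n).mono (hDstep n)) (hWresp (n+1))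
    obtain ⟨u, v, hu, hv, huw, hwv, hIcosub⟩ :=
      Respects.exists_Ico (hDfin (n+1)) (hlD (n+1)) (hrD (n+1)) hdresp
        ((Set.diff_subset).trans (hWsub n)) hw
    have huv : u < v := lt_of_le_of_lt huw hwv
    obtain ⟨huZ, huP⟩ := hDZ (n+1) u hu
    obtain ⟨hvZ, hvP⟩ := hDZ (n+1) v hv
    refine ⟨u, v, hIcosub, huv, ?_⟩
    have hgap := Zsd_gap2 hd hsf huZ hvZ (ne_of_lt huv)
      (Q := (B0 + P) + (n+1) * Am) huP hvP
    have habs : |u - v| = v - u := by rw [abs_sub_comm]; exact abs_of_pos (by linarith)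
    rw [habs] at hgap
    refine le_trans (le_of_eq ?_) hgap
    congr 1
    rw [hc0]
    push_cast
    ring
  -- the chain bound
  have hchain : ∀ N : ℕ, (W N ∩ S).Nonempty →
      (N:ℝ) ≤ (((B0 + P : ℕ):ℝ) + (Am:ℝ)) * K / (Am:ℝ) := by
    intro N hN
    have hforall : ∀ n, n < N → (W (n+1) ∩ S).Nonempty := by
      intro n hn
      obtain ⟨z, hz1, hz2⟩ := hN
      exact ⟨z, hWanti (n+1) N hn hz1, hz2⟩
    choose! u v hsub huv hgap using fun n hn => hdec n (hforall n hn)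
    have hkey : ∀ i j : ℕ, i < j → j < N →
        Disjoint (Set.Ico (u i) (v i)) (Set.Ico (u j) (v j)) := by
      intro i j hij hjN
      rw [Set.disjoint_left]
      intro z hzi hzj
      have h1 := hsub i (lt_trans hij hjN) hzi
      have h2 := hsub j hjN hzj
      exact h1.2 (hWanti (i+1) j hij h2.1)
    have hpair : (↑(Finset.range N) : Set ℕ).PairwiseDisjoint
        (fun n => Set.Ico (u n) (v n)) := by
      intro i hi j hj hij
      rw [Finset.mem_coe, Finset.mem_range] at hi hj
      rcases lt_or_gt_of_ne hij with h | h
      · exact hkey i j h hj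
      · exact (hkey j i h hi).symm
    have hvolsum : ∑ n ∈ Finset.range N, volume (Set.Ico (u n) (v n))
        = volume (⋃ n ∈ Finset.range N, Set.Ico (u n) (v n)) :=
      (measure_biUnion_finset hpair (fun n _ => measurableSet_Ico)).symm
    have hunion_sub : (⋃ n ∈ Finset.range N, Set.Ico (u n) (v n)) ⊆ Set.Ico l r := by
      intro z hz
      rw [Set.mem_iUnion₂] at hz
      obtain ⟨n, hn, hzn⟩ := hz
      exact hWsub n ((hsub n (Finset.mem_range.1 hn) hzn).1)
    have hineq : ∑ n ∈ Finset.range N, ENNReal.ofReal (v n - u n)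
        ≤ ENNReal.ofReal (r - l) := by
      calc ∑ n ∈ Finset.range N, ENNReal.ofReal (v n - u n)
          = ∑ n ∈ Finset.range N, volume (Set.Ico (u n) (v n)) := by
            refine Finset.sum_congr rfl (fun n _ => ?_)
            rw [Real.volume_Ico]
      _ = volume (⋃ n ∈ Finset.range N, Set.Ico (u n) (v n)) := hvolsum
      _ ≤ volume (Set.Ico l r) := measure_mono hunion_sub
      _ = ENNReal.ofReal (r - l) := Real.volume_Ico
    have hreal : ∑ n ∈ Finset.range N, (v n - u n) ≤ r - l := by
      have h1 : ENNReal.ofReal (∑ n ∈ Finset.range N, (v n - u n))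
          = ∑ n ∈ Finset.range N, ENNReal.ofReal (v n - u n) :=
        ENNReal.ofReal_sum_of_nonneg
          (fun n hn => le_of_lt (sub_pos.2 (huv n (Finset.mem_range.1 hn))))
      rw [← h1] at hineq
      exact (ENNReal.ofReal_le_ofReal_iff (by linarith)).1 hineq
    have hgapsum : ∑ n ∈ Finset.range N,
        1 / (c0 * ((B0 + P : ℕ):ℝ) + ((n:ℝ) + 1) * (c0 * (Am:ℝ))) ≤ r - l :=
      le_trans (Finset.sum_le_sum (fun n hn => hgap n (Finset.mem_range.1 hn))) hreal
    have hQ0pos : (0:ℝ) < c0 * ((B0 + P : ℕ):ℝ) := by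
      apply mul_pos hc0pos
      have : 0 < B0 + P := by omega
      exact_mod_cast this
    have hA'pos : (0:ℝ) < c0 * (Am:ℝ) := mul_pos hc0pos hAmpos
    have hcount := harmonic_count_bound hA'pos hQ0pos hgapsum
    refine le_trans hcount (le_of_eq ?_)
    rw [hK]
    field_simp
  -- the uniform return time N0
  set Bd : ℝ := (((B0 + P : ℕ):ℝ) + (Am:ℝ)) * K / (Am:ℝ) with hBd
  have hBdpos : 0 ≤ Bd := by
    rw [hBd]
    apply div_nonneg ?_ (le_of_lt hAmpos)
    have : (0:ℝ) ≤ ((B0 + P : ℕ):ℝ) := Nat.cast_nonneg _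
    nlinarith
  set N0 : ℕ := ⌈Bd⌉₊ + 1 with hN0
  have hN0pos : 1 ≤ N0 := by omega
  have hN0gt : Bd < (N0:ℝ) := by
    rw [hN0]
    push_cast
    have := Nat.le_ceil Bd
    linarith
  have hWN0 : W N0 ∩ S = ∅ := by
    by_contra hne
    have hne' : (W N0 ∩ S).Nonempty := Set.nonempty_iff_ne_empty.2 hne
    exact absurd (hchain N0 hne') (not_le.2 hN0gt)
  have hbase : ∀ z ∈ S, ∃ j, 1 ≤ j ∧ j ≤ N0 ∧ (T ^ j) z ∈ S := by
    intro z hz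
    have hzIco := hSsub hz
    have hznW : z ∉ W N0 := fun hmem => Set.eq_empty_iff_forall_notMem.1 hWN0 z ⟨hmem, hz⟩
    rw [hWmem] at hznW
    push_neg at hznW
    obtain ⟨jj, h1, h2, h3⟩ := hznW hzIco
    have h4 : (T ^ jj) z ∈ Set.Ico l r := hmaps jj z hzIco
    refine ⟨jj, h1, h2, ?_⟩
    by_contra h5
    exact h3 ⟨h4, h5⟩
  have hwindow : ∀ m : ℕ, 1 ≤ m → ∀ z ∈ S, ∃ j, m ≤ j ∧ j ≤ m + (N0 - 1) ∧
      (T ^ j) z ∈ S := by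
    intro m hm
    induction m, hm using Nat.le_induction with
    | base =>
      intro z hz
      obtain ⟨j, h1, h2, h3⟩ := hbase z hz
      exact ⟨j, h1, by omega, h3⟩
    | succ m hm ih =>
      intro z hz
      obtain ⟨j, h1, h2, h3⟩ := ih z hz
      by_cases hj : m + 1 ≤ j
      · exact ⟨j, hj, by omega, h3⟩
      · have hjm : j = m := by omega
        subst hjm
        obtain ⟨j', h1', h2', h3'⟩ := hbase _ h3
        refine ⟨j' + j, by omega, by omega, ?_⟩
        have h6 : (T ^ (j' + j)) z = (T ^ j') ((T ^ j) z) := by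
          rw [pow_add, Equiv.Perm.mul_apply]
        rw [h6]
        exact h3'
  -- ρ⁺ membership
  have hmemρp : N0 ∈ {n : ℕ | 1 ≤ n ∧
      ⇑(T ^ n) '' S ⊆ ⋃ i ∈ Finset.range n, ⇑(T ^ i) '' S} := by
    refine ⟨hN0pos, ?_⟩
    rintro w ⟨z, hz, rfl⟩
    obtain ⟨j, h1, h2, h3⟩ := hbase z hz
    refine Set.mem_iUnion.2 ⟨N0 - j, Set.mem_iUnion.2 ⟨Finset.mem_range.2 (by omega), ?_⟩⟩
    refine ⟨(T ^ j) z, h3, ?_⟩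
    have h4 : (T ^ (N0 - j)) ((T ^ j) z) = (T ^ (N0 - j + j)) z := by
      rw [pow_add, Equiv.Perm.mul_apply]
    rw [h4, show N0 - j + j = N0 from by omega]
  -- ρ⁻ membership
  have hmemρm : N0 ∈ {m : ℕ | 1 ≤ m ∧
      ⇑(T ^ m) '' S ⊆ ⋃ i ∈ Finset.range m, ⇑(T⁻¹ ^ i) '' S} := by
    refine ⟨hN0pos, ?_⟩
    rintro w ⟨z, hz, rfl⟩
    obtain ⟨j, h1, h2, h3⟩ := hwindow N0 hN0pos z hz
    refine Set.mem_iUnion.2 ⟨j - N0, Set.mem_iUnion.2 ⟨Finset.mem_range.2 (by omega), ?_⟩⟩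
    refine ⟨(T ^ j) z, h3, ?_⟩
    have h4 : (T ^ (j - N0)) ((T ^ N0) z) = (T ^ j) z := by
      rw [← Equiv.Perm.mul_apply, ← pow_add, show j - N0 + N0 = j from by omega]
    rw [inv_pow]
    show (T ^ (j - N0)).symm ((T ^ j) z) = (T ^ N0) z
    rw [Equiv.symm_apply_eq]
    exact h4.symm
  -- the ρ bounds
  have hN0C : (N0:ℝ) ≤ C * (P:ℝ) := by
    have h1 : (N0:ℝ) ≤ Bd + 2 := by
      rw [hN0]
      push_cast
      have := Nat.ceil_lt_add_one hBdpos
      linarith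
    have hPR : (1:ℝ) ≤ (P:ℝ) := by exact_mod_cast hP1
    have h2 : Bd ≤ (P:ℝ) * (((B0:ℝ) + 1 + (Am:ℝ)) * K / (Am:ℝ)) := by
      rw [hBd]
      have hcast : ((B0 + P : ℕ):ℝ) = (B0:ℝ) + (P:ℝ) := by push_cast; ring
      rw [hcast, div_le_iff₀ hAmpos]
      have hB0R : (0:ℝ) ≤ (B0:ℝ) := Nat.cast_nonneg _
      have hAmR : (0:ℝ) ≤ (Am:ℝ) := le_of_lt hAmpos
      have e2 : (P:ℝ) * (((B0:ℝ) + 1 + (Am:ℝ)) * K / (Am:ℝ)) * (Am:ℝ)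
          = (P:ℝ) * (((B0:ℝ) + 1 + (Am:ℝ)) * K) := by
        field_simp
      rw [e2]
      nlinarith [mul_nonneg (sub_nonneg.2 hPR) (mul_nonneg hB0R (le_of_lt hKpos)),
        mul_nonneg (sub_nonneg.2 hPR) (mul_nonneg hAmR (le_of_lt hKpos))]
    have h3 : Bd + 2 ≤ (P:ℝ) * (((B0:ℝ) + 1 + (Am:ℝ)) * K / (Am:ℝ) + 2) := by
      have : (2:ℝ) ≤ 2 * (P:ℝ) := by linarith
      nlinarith
    have h4 : (P:ℝ) * (((B0:ℝ) + 1 + (Am:ℝ)) * K / (Am:ℝ) + 2) ≤ C * (P:ℝ) := by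
      rw [hC]
      have hrl : (0:ℝ) ≤ (r - l) * (P:ℝ) :=
        mul_nonneg (by linarith) (Nat.cast_nonneg _)
      nlinarith
    exact le_trans h1 (le_trans h3 h4)
  have hρp : (rhoPlusSet T S : ℝ) ≤ C * (PsiSet d S : ℝ) := by
    have h1 : rhoPlusSet T S ≤ N0 := Nat.sInf_le hmemρp
    have h2 : (rhoPlusSet T S : ℝ) ≤ (N0:ℝ) := by exact_mod_cast h1
    rw [← hPdef]
    exact le_trans h2 hN0C
  have hρm : (rhoMinusSet T S : ℝ) ≤ C * (PsiSet d S : ℝ) := by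
    have h1 : rhoMinusSet T S ≤ N0 := Nat.sInf_le hmemρm
    have h2 : (rhoMinusSet T S : ℝ) ≤ (N0:ℝ) := by exact_mod_cast h1
    rw [← hPdef]
    exact le_trans h2 hN0C
  -- σ⁺
  have hvolimg : ∀ i : ℕ, volume (⇑(T ^ i) '' S) = volume S := by
    intro i
    rw [Equiv.image_eq_preimage_symm]
    have h1 : (T ^ i).symm = T.symm ^ i := (inv_pow T i).symm
    rw [h1]
    exact (hTspow i).2 S hSmeas
  have hmeasimg : ∀ i : ℕ, MeasurableSet (⇑(T ^ i) '' S) := by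
    intro i
    rw [Equiv.image_eq_preimage_symm]
    have h1 : (T ^ i).symm = T.symm ^ i := (inv_pow T i).symm
    rw [h1]
    exact (hTspow i).1 hSmeas
  have hvolimg' : ∀ i : ℕ, volume (⇑(T.symm ^ i) '' S) = volume S := by
    intro i
    rw [Equiv.image_eq_preimage_symm]
    have h1 : (T.symm ^ i).symm = T ^ i := by
      simp only [← Equiv.Perm.inv_def, inv_pow, inv_inv]
    rw [h1]
    exact (hTpow i).2 S hSmeas
  have hmeasimg' : ∀ i : ℕ, MeasurableSet (⇑(T.symm ^ i) '' S) := by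
    intro i
    rw [Equiv.image_eq_preimage_symm]
    have h1 : (T.symm ^ i).symm = T ^ i := by
      simp only [← Equiv.Perm.inv_def, inv_pow, inv_inv]
    rw [h1]
    exact (hTpow i).1 hSmeas
  obtain ⟨j1, hj11, hj12, hj13⟩ := hbase z0 hz0
  have hσpne : {n : ℕ | 1 ≤ n ∧ (⇑(T ^ n) '' S ∩ S).Nonempty}.Nonempty := by
    refine ⟨j1, ?_⟩
    rw [Set.mem_setOf_eq]
    exact ⟨hj11, ⟨(T ^ j1) z0, ⟨z0, hz0, rfl⟩, hj13⟩⟩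
  have hσmne : {m : ℕ | 1 ≤ m ∧ (⇑(T⁻¹ ^ m) '' S ∩ S).Nonempty}.Nonempty := by
    refine ⟨j1, ?_⟩
    rw [Set.mem_setOf_eq]
    refine ⟨hj11, ⟨z0, ⟨(T ^ j1) z0, hj13, ?_⟩, hz0⟩⟩
    rw [inv_pow]
    show (T ^ j1).symm ((T ^ j1) z0) = z0
    exact Equiv.symm_apply_apply _ _
  have hsigma_gen : ∀ (σ : ℕ), (∀ m, 1 ≤ m → m < σ → (⇑(T ^ m) '' S ∩ S) = ∅) →
      (σ:ℝ) * (volume S).toReal ≤ r - l := by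
    intro σ hσ
    have hdisj : (↑(Finset.range σ) : Set ℕ).PairwiseDisjoint
        (fun i => ⇑(T ^ i) '' S) := by
      intro i hi j hj hij
      rw [Finset.mem_coe, Finset.mem_range] at hi hj
      have hkey : ∀ i j : ℕ, i < j → j < σ →
          Disjoint (⇑(T ^ i) '' S) (⇑(T ^ j) '' S) := by
        intro i j hij hjσ
        rw [Set.disjoint_left]
        rintro w ⟨y, hy, hwy⟩ ⟨y', hy', hwy'⟩
        have h1 : (T ^ j) y' = (T ^ i) y := by rw [hwy, hwy']
        have h2 : (T ^ i) ((T ^ (j - i)) y') = (T ^ i) y := by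
          rw [← Equiv.Perm.mul_apply, ← pow_add, show i + (j - i) = j from by omega, h1]
        have h3 : (T ^ (j - i)) y' = y := (T ^ i).injective h2
        have h4 : (⇑(T ^ (j - i)) '' S ∩ S).Nonempty := ⟨y, ⟨y', hy', h3⟩, hy⟩
        have h5 := hσ (j - i) (by omega) (by omega)
        rw [h5] at h4
        exact Set.not_nonempty_empty h4
      rcases lt_or_gt_of_ne hij with h | h
      · exact hkey i j h hj
      · exact (hkey j i h hi).symm
    have hsum : ∑ i ∈ Finset.range σ, volume (⇑(T ^ i) '' S)
        = volume (⋃ i ∈ Finset.range σ, ⇑(T ^ i) '' S) :=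
      (measure_biUnion_finset hdisj (fun i _ => hmeasimg i)).symm
    have hsub2 : (⋃ i ∈ Finset.range σ, ⇑(T ^ i) '' S) ⊆ Set.Ico l r := by
      intro w hw
      rw [Set.mem_iUnion₂] at hw
      obtain ⟨i, hi, y, hy, hwy⟩ := hw
      rw [← hwy]
      exact hmaps i y (hSsub hy)
    have hle : (σ : ENNReal) * volume S ≤ ENNReal.ofReal (r - l) := by
      calc (σ : ENNReal) * volume S = ∑ _i ∈ Finset.range σ, volume S := by
            rw [Finset.sum_const, Finset.card_range, nsmul_eq_mul]
      _ = ∑ i ∈ Finset.range σ, volume (⇑(T ^ i) '' S) :=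
            Finset.sum_congr rfl (fun i _ => (hvolimg i).symm)
      _ = volume (⋃ i ∈ Finset.range σ, ⇑(T ^ i) '' S) := hsum
      _ ≤ volume (Set.Ico l r) := measure_mono hsub2
      _ = ENNReal.ofReal (r - l) := Real.volume_Ico
    have h6 := ENNReal.toReal_mono ENNReal.ofReal_ne_top hle
    rw [ENNReal.toReal_mul, ENNReal.toReal_ofReal (by linarith)] at h6
    simpa using h6
  have hsigma_gen' : ∀ (σ : ℕ), (∀ m, 1 ≤ m → m < σ → (⇑(T⁻¹ ^ m) '' S ∩ S) = ∅) →
      (σ:ℝ) * (volume S).toReal ≤ r - l := by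
    intro σ hσ
    have hdisj : (↑(Finset.range σ) : Set ℕ).PairwiseDisjoint
        (fun i => ⇑(T.symm ^ i) '' S) := by
      intro i hi j hj hij
      rw [Finset.mem_coe, Finset.mem_range] at hi hj
      have hkey : ∀ i j : ℕ, i < j → j < σ →
          Disjoint (⇑(T.symm ^ i) '' S) (⇑(T.symm ^ j) '' S) := by
        intro i j hij hjσ
        rw [Set.disjoint_left]
        rintro w ⟨y, hy, hwy⟩ ⟨y', hy', hwy'⟩
        have h1 : (T.symm ^ j) y' = (T.symm ^ i) y := by rw [hwy, hwy']
        have h2 : (T.symm ^ i) ((T.symm ^ (j - i)) y') = (T.symm ^ i) y := by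
          rw [← Equiv.Perm.mul_apply, ← pow_add, show i + (j - i) = j from by omega, h1]
        have h3 : (T.symm ^ (j - i)) y' = y := (T.symm ^ i).injective h2
        have h4 : (⇑(T⁻¹ ^ (j - i)) '' S ∩ S).Nonempty := ⟨y, ⟨y', hy', h3⟩, hy⟩
        have h5 := hσ (j - i) (by omega) (by omega)
        rw [h5] at h4
        exact Set.not_nonempty_empty h4
      rcases lt_or_gt_of_ne hij with h | h
      · exact hkey i j h hj
      · exact (hkey j i h hi).symm
    have hsum : ∑ i ∈ Finset.range σ, volume (⇑(T.symm ^ i) '' S)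
        = volume (⋃ i ∈ Finset.range σ, ⇑(T.symm ^ i) '' S) :=
      (measure_biUnion_finset hdisj (fun i _ => hmeasimg' i)).symm
    have hsub2 : (⋃ i ∈ Finset.range σ, ⇑(T.symm ^ i) '' S) ⊆ Set.Ico l r := by
      intro w hw
      rw [Set.mem_iUnion₂] at hw
      obtain ⟨i, hi, y, hy, hwy⟩ := hw
      rw [← hwy]
      exact hmaps' i y (hSsub hy)
    have hle : (σ : ENNReal) * volume S ≤ ENNReal.ofReal (r - l) := by
      calc (σ : ENNReal) * volume S = ∑ _i ∈ Finset.range σ, volume S := by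
            rw [Finset.sum_const, Finset.card_range, nsmul_eq_mul]
      _ = ∑ i ∈ Finset.range σ, volume (⇑(T.symm ^ i) '' S) :=
            Finset.sum_congr rfl (fun i _ => (hvolimg' i).symm)
      _ = volume (⋃ i ∈ Finset.range σ, ⇑(T.symm ^ i) '' S) := hsum
      _ ≤ volume (Set.Ico l r) := measure_mono hsub2
      _ = ENNReal.ofReal (r - l) := Real.volume_Ico
    have h6 := ENNReal.toReal_mono ENNReal.ofReal_ne_top hle
    rw [ENNReal.toReal_mul, ENNReal.toReal_ofReal (by linarith)] at h6
    simpa using h6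
  have hσp : (sigmaPlusSet T S : ℝ) ≤ C / (volume S).toReal := by
    have h1 : (sigmaPlusSet T S : ℝ) * (volume S).toReal ≤ r - l := by
      apply hsigma_gen
      intro m h1m hmσ
      by_contra hne
      have hne' : (⇑(T ^ m) '' S ∩ S).Nonempty := Set.nonempty_iff_ne_empty.2 hne
      have hmem : m ∈ {n : ℕ | 1 ≤ n ∧ (⇑(T ^ n) '' S ∩ S).Nonempty} := by
        rw [Set.mem_setOf_eq]; exact ⟨h1m, hne'⟩
      exact absurd (Nat.sInf_le hmem) (not_le.2 hmσ)
    rw [le_div_iff₀ hvolS_pos]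
    have : r - l ≤ C := by rw [hC]; linarith [hCterm]
    linarith
  have hσm : (sigmaMinusSet T S : ℝ) ≤ C / (volume S).toReal := by
    have h1 : (sigmaMinusSet T S : ℝ) * (volume S).toReal ≤ r - l := by
      apply hsigma_gen'
      intro m h1m hmσ
      by_contra hne
      have hne' : (⇑(T⁻¹ ^ m) '' S ∩ S).Nonempty := Set.nonempty_iff_ne_empty.2 hne
      have hmem : m ∈ {n : ℕ | 1 ≤ n ∧ (⇑(T⁻¹ ^ n) '' S ∩ S).Nonempty} := by
        rw [Set.mem_setOf_eq]; exact ⟨h1m, hne'⟩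
      exact absurd (Nat.sInf_le hmem) (not_le.2 hmσ)
    rw [le_div_iff₀ hvolS_pos]
    have : r - l ≤ C := by rw [hC]; linarith [hCterm]
    linarith
  exact ⟨⟨N0, hmemρp⟩, ⟨N0, hmemρm⟩, hρp, hρm, hσp, hσm⟩

end
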